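/- arXiv:2102.08089 — 10 statements merged into one kernel-verified Lean document; each statement's English description precedes it below -/
import Mathlib

section
/- Let φ₀, φ₁ ∈ OR be such that φ₀/φ₁ is bounded in a neighbourhood of infinity, and let ψ ∈ B be pseudoconcave in a neighbourhood of infinity (i.e., ψ is an interpolation parameter). Then the function φ defined by φ(t) := φ₀(t)·ψ(φ₁(t)/φ₀(t)) for t ≥ 1 belongs to the class OR. -/
open MeasureTheory Filter Set

/-- A Borel measurable function `φ : [1,∞) → (0,∞)` is OR-varying at infinity:
there exist `a > 1` and `c ≥ 1` with `c⁻¹ ≤ φ(λt)/φ(t) ≤ c` for all `t ≥ 1`, `λ ∈ [1,a]`. -/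
def ORClass (φ : ℝ → ℝ) : Prop :=
  Measurable φ ∧ (∀ t, 1 ≤ t → 0 < φ t) ∧
    ∃ a > 1, ∃ c ≥ 1, ∀ t, 1 ≤ t → ∀ l, 1 ≤ l → l ≤ a →
      c⁻¹ ≤ φ (l * t) / φ t ∧ φ (l * t) / φ t ≤ c

/-- The class `B` of Borel measurable functions `ψ : (0,∞) → (0,∞)` that are bounded on each
compact interval `[a,b] ⊂ (0,∞)` and such that `1/ψ` is bounded on each ray `[r,∞)`, `r > 0`. -/
def BClass (ψ : ℝ → ℝ) : Prop :=
  Measurable ψ ∧ (∀ t, 0 < t → 0 < ψ t) ∧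
    (∀ a b : ℝ, 0 < a → a < b → ∃ M, ∀ t, a ≤ t → t ≤ b → ψ t ≤ M) ∧
    (∀ r : ℝ, 0 < r → ∃ M, ∀ t, r ≤ t → 1 / ψ t ≤ M)

/-- `ψ` is pseudoconcave in a neighbourhood of infinity: there are `r > 0` and a concave
function `ψ₁ : (r,∞) → (0,∞)` such that `ψ/ψ₁` and `ψ₁/ψ` are bounded on `(r,∞)`. -/
def PseudoconcaveAtTop (ψ : ℝ → ℝ) : Prop :=
  ∃ r > (0 : ℝ), ∃ ψ₁ : ℝ → ℝ, (∀ t, r < t → 0 < ψ₁ t) ∧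
    ConcaveOn ℝ (Set.Ioi r) ψ₁ ∧
    ∃ M : ℝ, ∀ t, r < t → ψ t / ψ₁ t ≤ M ∧ ψ₁ t / ψ t ≤ M

section Helpers
open Set

private lemma concave_mono' {r : ℝ} {f : ℝ → ℝ} (hpos : ∀ t, r < t → 0 < f t)
    (hc : ConcaveOn ℝ (Set.Ioi r) f) {x y : ℝ} (hx : r < x) (hxy : x ≤ y) :
    f x ≤ f y := by
  by_contra hcon
  push_neg at hcon
  rcases eq_or_lt_of_le hxy with rfl | hlt
  · exact absurd hcon (lt_irrefl _)
  have hd : 0 < f x - f y := by linarith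
  set z := max (y + 1) (x + (y - x) * f x / (f x - f y)) with hz
  have hzy : y < z := lt_of_lt_of_le (by linarith) (le_max_left _ _)
  have hzx : x < z := hlt.trans hzy
  have hz2 : x + (y - x) * f x / (f x - f y) ≤ z := le_max_right _ _
  have hrz : r < z := hx.trans hzx
  have hfz : 0 < f z := hpos z hrz
  have ha : (0:ℝ) ≤ (z - y) / (z - x) := by
    apply div_nonneg <;> linarith
  have hb : (0:ℝ) < (y - x) / (z - x) := by
    apply div_pos <;> linarith
  have hab : (z - y) / (z - x) + (y - x) / (z - x) = 1 := by
    rw [← add_div]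
    have h : z - y + (y - x) = z - x := by ring
    rw [h]; exact div_self (by linarith)
  have hcomb : ((z - y) / (z - x)) * x + ((y - x) / (z - x)) * z = y := by
    have hne : z - x ≠ 0 := by linarith
    field_simp
    ring
  have key := hc.2 (show x ∈ Ioi r from hx) (show z ∈ Ioi r from hrz) ha hb.le hab
  rw [smul_eq_mul, smul_eq_mul, smul_eq_mul, smul_eq_mul, hcomb] at key
  have h1 : (y - x) * f x / (f x - f y) ≤ z - x := by linarith
  have h2 : (y - x) * f x ≤ (z - x) * (f x - f y) := by
    rw [div_le_iff₀ hd] at h1; linarith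
  have h3 : f y ≤ (z - y) / (z - x) * f x := by
    rw [div_mul_eq_mul_div, le_div_iff₀ (by linarith : (0:ℝ) < z - x)]
    nlinarith
  nlinarith [mul_pos hb hfz]

private lemma concave_chord {r : ℝ} {f : ℝ → ℝ} (hpos : ∀ t, r < t → 0 < f t)
    (hc : ConcaveOn ℝ (Set.Ioi r) f) {r' x y : ℝ} (hr' : r < r') (hx : r' < x)
    (hxy : x ≤ y) : (x - r') * f y ≤ (y - r') * f x := by
  rcases eq_or_lt_of_le hxy with rfl | hlt
  · exact le_of_eq rfl
  · have ha : (0:ℝ) ≤ (y - x) / (y - r') := by apply div_nonneg <;> linarith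
    have hb : (0:ℝ) ≤ (x - r') / (y - r') := by apply div_nonneg <;> linarith
    have hab : (y - x) / (y - r') + (x - r') / (y - r') = 1 := by
      rw [← add_div]
      have h : y - x + (x - r') = y - r' := by ring
      rw [h]; exact div_self (by linarith)
    have hcomb : ((y - x) / (y - r')) * r' + ((x - r') / (y - r')) * y = x := by
      have hne : y - r' ≠ 0 := by linarith
      field_simp
      ring
    have key := hc.2 (show r' ∈ Ioi r from hr')
      (show y ∈ Ioi r from hr'.trans (hx.trans_le hxy)) ha hb hab
    rw [smul_eq_mul, smul_eq_mul, smul_eq_mul, smul_eq_mul, hcomb] at key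
    have hfr' : 0 < f r' := hpos r' hr'
    have h3 : (x - r') / (y - r') * f y ≤ f x := by nlinarith
    rw [div_mul_eq_mul_div, div_le_iff₀ (by linarith : (0:ℝ) < y - r')] at h3
    nlinarith

private lemma or_pow_bound {φ : ℝ → ℝ} {a c : ℝ} (ha : 1 < a) (hc : 1 ≤ c)
    (hpos : ∀ t, 1 ≤ t → 0 < φ t)
    (hOR : ∀ t, 1 ≤ t → ∀ l, 1 ≤ l → l ≤ a → c⁻¹ ≤ φ (l * t) / φ t ∧ φ (l * t) / φ t ≤ c) :
    ∀ n : ℕ, ∀ t, 1 ≤ t → t ≤ a ^ n → φ 1 / c ^ n ≤ φ t ∧ φ t ≤ φ 1 * c ^ n := by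
  intro n
  have hc0 : (0:ℝ) < c := lt_of_lt_of_le one_pos hc
  induction n with
  | zero =>
    intro t ht1 ht2
    simp only [pow_zero] at ht2 ⊢
    have : t = 1 := le_antisymm ht2 ht1
    subst this
    constructor
    · rw [div_one]
    · rw [mul_one]
  | succ n ih =>
    intro t ht1 hta
    have hcn : (0:ℝ) < c ^ n := pow_pos hc0 n
    have hcn1 : (0:ℝ) < c ^ (n+1) := pow_pos hc0 (n+1)
    have hpow : c ^ n ≤ c ^ (n+1) := pow_le_pow_right₀ (by linarith) (by omega)
    have hφ1 : 0 < φ 1 := hpos 1 le_rfl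
    by_cases h : t ≤ a ^ n
    · have hIH := ih t ht1 h
      constructor
      · calc φ 1 / c ^ (n+1) ≤ φ 1 / c ^ n := by
              apply div_le_div_of_nonneg_left hφ1.le hcn hpow
          _ ≤ φ t := hIH.1
      · calc φ t ≤ φ 1 * c ^ n := hIH.2
          _ ≤ φ 1 * c ^ (n+1) := by nlinarith
    · push_neg at h
      have han : (1:ℝ) ≤ a ^ n := one_le_pow₀ ha.le
      set s := max 1 (t / a) with hs
      have hs1 : (1:ℝ) ≤ s := le_max_left _ _
      have hs0 : (0:ℝ) < s := lt_of_lt_of_le one_pos hs1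
      have hst : s ≤ t := by
        apply max_le ht1
        rw [div_le_iff₀ (by linarith : (0:ℝ) < a)]
        nlinarith
      have hsa : s ≤ a ^ n := by
        apply max_le han
        rw [div_le_iff₀ (by linarith : (0:ℝ) < a)]
        calc t ≤ a ^ (n+1) := hta
          _ = a ^ n * a := by rw [pow_succ]
      have hl1 : 1 ≤ t / s := (one_le_div hs0).mpr hst
      have hla : t / s ≤ a := by
        rw [div_le_iff₀ hs0]
        have h' : t / a ≤ s := le_max_right _ _
        rw [div_le_iff₀ (by linarith : (0:ℝ) < a)] at h'
        linarith
      have hls : (t / s) * s = t := div_mul_cancel₀ _ (ne_of_gt hs0)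
      have hO := hOR s hs1 (t / s) hl1 hla
      rw [hls] at hO
      have hφs : 0 < φ s := hpos s hs1
      have hIH := ih s hs1 hsa
      have hub : φ t ≤ φ s * c := by
        have h' := hO.2
        rw [div_le_iff₀ hφs] at h'
        linarith
      have hlb : φ s ≤ φ t * c := by
        have h' := hO.1
        rw [le_div_iff₀ hφs] at h'
        calc φ s = (c⁻¹ * φ s) * c := by field_simp
          _ ≤ φ t * c := by nlinarith
      constructor
      · rw [div_le_iff₀ hcn1, pow_succ]
        have h1 : φ 1 / c ^ n ≤ φ s := hIH.1
        rw [div_le_iff₀ hcn] at h1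
        nlinarith
      · calc φ t ≤ φ s * c := hub
          _ ≤ (φ 1 * c ^ n) * c := by nlinarith [hIH.2]
          _ = φ 1 * c ^ (n+1) := by rw [mul_assoc, pow_succ]

private lemma or_compact_bound {φ : ℝ → ℝ} {a c : ℝ} (ha : 1 < a) (hc : 1 ≤ c)
    (hpos : ∀ t, 1 ≤ t → 0 < φ t)
    (hOR : ∀ t, 1 ≤ t → ∀ l, 1 ≤ l → l ≤ a → c⁻¹ ≤ φ (l * t) / φ t ∧ φ (l * t) / φ t ≤ c)
    (Y : ℝ) :
    ∃ m M : ℝ, 0 < m ∧ ∀ t, 1 ≤ t → t ≤ Y → m ≤ φ t ∧ φ t ≤ M := by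
  obtain ⟨n, hn⟩ := pow_unbounded_of_one_lt Y ha
  refine ⟨φ 1 / c ^ n, φ 1 * c ^ n, by have := hpos 1 le_rfl; positivity, ?_⟩
  intro t ht1 htY
  exact or_pow_bound ha hc hpos hOR n t ht1 (htY.trans hn.le)

end Helpers

private lemma psi_ratio {ψ : ℝ → ℝ} (hψ : BClass ψ) (hpc : PseudoconcaveAtTop ψ)
    {m K : ℝ} (hm : 0 < m) (hK : 1 ≤ K) :
    ∃ C, 1 ≤ C ∧ ∀ s s', m ≤ s → m ≤ s' → s' ≤ K * s → s ≤ K * s' → ψ s' ≤ C * ψ s := by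
  obtain ⟨r, hr, ψ₁, hψ₁pos, hconc, Mpc, hMpc⟩ := hpc
  obtain ⟨_, hψpos, hcomp, hray⟩ := hψ
  set P := 2 * r + 2 with hP
  have hrP : r < P := by simp only [hP]; linarith
  have hP0 : 0 < P := by simp only [hP]; linarith
  have hMpc0 : 0 < Mpc := by
    have h1 := (hMpc P hrP).2
    have h2 := hψ₁pos P hrP
    have h3 := hψpos P hP0
    calc (0:ℝ) < ψ₁ P / ψ P := div_pos h2 h3
      _ ≤ Mpc := h1
  obtain ⟨B₁, hB₁⟩ := hcomp m (K * P + m + 1) hm (by nlinarith)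
  obtain ⟨B₂, hB₂⟩ := hray m hm
  have hB₂0 : 0 < B₂ := by
    have h' := hB₂ m le_rfl
    have hm' := hψpos m hm
    calc (0:ℝ) < 1 / ψ m := by positivity
      _ ≤ B₂ := h'
  refine ⟨max (max 1 (B₁ * B₂)) (2 * K * (Mpc * Mpc)),
    le_trans (le_max_left 1 _) (le_max_left _ _), ?_⟩
  intro s s' hs hs' hsK hs'K
  have hψs := hψpos s (hm.trans_le hs)
  have hψs' := hψpos s' (hm.trans_le hs')
  have hpsB : 1 ≤ B₂ * ψ s := by
    have h' := hB₂ s hs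
    rw [div_le_iff₀ hψs] at h'
    linarith
  by_cases hcase : P ≤ s ∧ P ≤ s'
  · obtain ⟨hPs, hPs'⟩ := hcase
    have hrs : r < s := hrP.trans_le hPs
    have hrs' : r < s' := hrP.trans_le hPs'
    have hψ₁s := hψ₁pos s hrs
    have hψ₁s' := hψ₁pos s' hrs'
    have key : ψ₁ s' ≤ 2 * K * ψ₁ s := by
      rcases le_or_gt s' s with h | h
      · have := concave_mono' hψ₁pos hconc hrs' h
        nlinarith
      · have hr' : r < r + 1 := by linarith
        have hx : r + 1 < s := by simp only [hP] at hPs; linarith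
        have hch := concave_chord hψ₁pos hconc hr' hx h.le
        have h1 : s / 2 ≤ s - (r + 1) := by simp only [hP] at hPs; linarith
        have h2 : s' - (r + 1) ≤ K * s := by linarith
        have h3 : (s / 2) * ψ₁ s' ≤ (K * s) * ψ₁ s := by nlinarith
        have hs0 : 0 < s := by linarith
        nlinarith
    have h1 : ψ s' ≤ Mpc * ψ₁ s' := by
      have h' := (hMpc s' hrs').1
      rw [div_le_iff₀ hψ₁s'] at h'
      linarith
    have h2 : ψ₁ s ≤ Mpc * ψ s := by
      have h' := (hMpc s hrs).2
      rw [div_le_iff₀ hψs] at h'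
      linarith
    calc ψ s' ≤ Mpc * ψ₁ s' := h1
      _ ≤ Mpc * (2 * K * ψ₁ s) := by nlinarith [mul_le_mul_of_nonneg_left key hMpc0.le]
      _ ≤ Mpc * (2 * K * (Mpc * ψ s)) := by
          nlinarith [mul_le_mul_of_nonneg_left h2 (by positivity : (0:ℝ) ≤ Mpc * (2 * K))]
      _ = (2 * K * (Mpc * Mpc)) * ψ s := by ring
      _ ≤ max (max 1 (B₁ * B₂)) (2 * K * (Mpc * Mpc)) * ψ s := by
          apply mul_le_mul_of_nonneg_right (le_max_right _ _) hψs.le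
  · have hboth : s ≤ K * P + m + 1 ∧ s' ≤ K * P + m + 1 := by
      rcases not_and_or.mp hcase with h | h
      · push_neg at h
        constructor <;> nlinarith
      · push_neg at h
        constructor <;> nlinarith
    have hub : ψ s' ≤ B₁ := hB₁ s' hs' hboth.2
    calc ψ s' ≤ B₁ * B₂ * ψ s := by nlinarith
      _ ≤ max (max 1 (B₁ * B₂)) (2 * K * (Mpc * Mpc)) * ψ s := by
          apply mul_le_mul_of_nonneg_right
            (le_trans (le_max_right 1 _) (le_max_left _ _)) hψs.le
/-- If `φ₀, φ₁ ∈ OR`, `φ₀/φ₁` is bounded in a neighbourhood of infinity, and `ψ ∈ B` is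
pseudoconcave in a neighbourhood of infinity (i.e. an interpolation parameter), then
`φ(t) = φ₀(t) · ψ(φ₁(t)/φ₀(t))` belongs to `OR`. -/
theorem or_of_interpolation_parameter (φ₀ φ₁ ψ : ℝ → ℝ)
    (h0 : ORClass φ₀) (h1 : ORClass φ₁)
    (hbdd : ∃ T : ℝ, 1 ≤ T ∧ ∃ M : ℝ, ∀ t, T ≤ t → φ₀ t / φ₁ t ≤ M)
    (hψ : BClass ψ) (hpc : PseudoconcaveAtTop ψ) :
    ORClass (fun t => φ₀ t * ψ (φ₁ t / φ₀ t)) := by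
  obtain ⟨hm0, hp0, a₀, ha₀, c₀, hc₀, hOR₀⟩ := h0
  obtain ⟨hm1, hp1, a₁, ha₁, c₁, hc₁, hOR₁⟩ := h1
  obtain ⟨T, hT1, M, hM⟩ := hbdd
  have hψm := hψ.1
  have hψp := hψ.2.1
  refine ⟨hm0.mul (hψm.comp (hm1.div hm0)), ?_, ?_⟩
  · intro t ht
    exact mul_pos (hp0 t ht) (hψp _ (div_pos (hp1 t ht) (hp0 t ht)))
  · have hc₀0 : (0:ℝ) < c₀ := lt_of_lt_of_le one_pos hc₀
    have hc₁0 : (0:ℝ) < c₁ := lt_of_lt_of_le one_pos hc₁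
    have hM0 : 0 < M := by
      have h1' := hM T le_rfl
      have h2' := div_pos (hp0 T hT1) (hp1 T hT1)
      linarith
    obtain ⟨m0, M0, hm0p, hB0⟩ := or_compact_bound ha₀ hc₀ hp0 hOR₀ (a₀ * T)
    obtain ⟨m1, M1, hm1p, hB1⟩ := or_compact_bound ha₁ hc₁ hp1 hOR₁ (a₀ * T)
    have h1aT : (1:ℝ) ≤ a₀ * T := by nlinarith
    have hM0p : 0 < M0 :=
      lt_of_lt_of_le hm0p ((hB0 1 le_rfl h1aT).1.trans (hB0 1 le_rfl h1aT).2)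
    set mm := min (1/M) (m1/M0) with hmm
    have hmmp : 0 < mm := lt_min (by positivity) (by positivity)
    set K := c₀ * c₁ with hKdef
    have hK1 : 1 ≤ K := by nlinarith
    obtain ⟨C, hC1, hC⟩ := psi_ratio hψ hpc hmmp hK1
    have hcC0 : (0:ℝ) < c₀ * C := by nlinarith
    refine ⟨min a₀ a₁, lt_min ha₀ ha₁, c₀ * C, by nlinarith, ?_⟩
    intro t ht l hl1 hla
    have hla0 : l ≤ a₀ := hla.trans (min_le_left _ _)
    have hla1 : l ≤ a₁ := hla.trans (min_le_right _ _)
    have hlt1 : (1:ℝ) ≤ l * t := by nlinarith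
    have hO0 := hOR₀ t ht l hl1 hla0
    have hO1 := hOR₁ t ht l hl1 hla1
    have hp0t := hp0 t ht
    have hp0lt := hp0 _ hlt1
    have hp1t := hp1 t ht
    have hp1lt := hp1 _ hlt1
    have e0u : φ₀ (l*t) ≤ c₀ * φ₀ t := by
      have h' := hO0.2; rw [div_le_iff₀ hp0t] at h'; linarith
    have e0l : φ₀ t ≤ c₀ * φ₀ (l*t) := by
      have h' := hO0.1; rw [le_div_iff₀ hp0t] at h'
      have h'' := mul_le_mul_of_nonneg_left h' hc₀0.le
      rw [← mul_assoc, mul_inv_cancel₀ (ne_of_gt hc₀0), one_mul] at h''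
      linarith
    have e1u : φ₁ (l*t) ≤ c₁ * φ₁ t := by
      have h' := hO1.2; rw [div_le_iff₀ hp1t] at h'; linarith
    have e1l : φ₁ t ≤ c₁ * φ₁ (l*t) := by
      have h' := hO1.1; rw [le_div_iff₀ hp1t] at h'
      have h'' := mul_le_mul_of_nonneg_left h' hc₁0.le
      rw [← mul_assoc, mul_inv_cancel₀ (ne_of_gt hc₁0), one_mul] at h''
      linarith
    -- lower bound for the ratio φ₁/φ₀ at relevant points
    have hu : ∀ s, 1 ≤ s → (s ≤ a₀ * T ∨ T ≤ s) → mm ≤ φ₁ s / φ₀ s := by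
      intro s hs1 hcase
      have hp0s := hp0 s hs1
      have hp1s := hp1 s hs1
      rcases hcase with h | h
      · have hb0 := hB0 s hs1 h
        have hb1 := hB1 s hs1 h
        have h' : m1 / M0 ≤ φ₁ s / φ₀ s := by
          apply div_le_div₀ hp1s.le hb1.1 hp0s hb0.2
        exact le_trans (min_le_right _ _) h'
      · have h' := hM s h
        rw [div_le_iff₀ hp1s] at h'
        have h'' : 1/M ≤ φ₁ s / φ₀ s := by
          rw [div_le_div_iff₀ hM0 hp0s]
          nlinarith
        exact le_trans (min_le_left _ _) h''
    have hut : mm ≤ φ₁ t / φ₀ t := by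
      by_cases h : t ≤ T
      · exact hu t ht (Or.inl (h.trans (le_mul_of_one_le_left (by linarith) ha₀.le)))
      · exact hu t ht (Or.inr (le_of_not_ge h))
    have hult : mm ≤ φ₁ (l*t) / φ₀ (l*t) := by
      by_cases h : t ≤ T
      · exact hu _ hlt1 (Or.inl (mul_le_mul hla0 h (by linarith) (by linarith)))
      · refine hu _ hlt1 (Or.inr ?_)
        have h' : t ≤ l*t := le_mul_of_one_le_left (by linarith) hl1
        linarith [le_of_not_ge h]
    -- comparability of the ratios
    have hr1 : φ₁ (l*t)/φ₀ (l*t) ≤ K * (φ₁ t / φ₀ t) := by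
      rw [← mul_div_assoc, div_le_div_iff₀ hp0lt hp0t]
      calc φ₁ (l*t) * φ₀ t ≤ (c₁ * φ₁ t) * (c₀ * φ₀ (l*t)) :=
            mul_le_mul e1u e0l hp0t.le (by positivity)
        _ = K * φ₁ t * φ₀ (l*t) := by rw [hKdef]; ring
    have hr2 : φ₁ t/φ₀ t ≤ K * (φ₁ (l*t) / φ₀ (l*t)) := by
      rw [← mul_div_assoc, div_le_div_iff₀ hp0t hp0lt]
      calc φ₁ t * φ₀ (l*t) ≤ (c₁ * φ₁ (l*t)) * (c₀ * φ₀ t) :=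
            mul_le_mul e1l e0u hp0lt.le (by positivity)
        _ = K * φ₁ (l*t) * φ₀ t := by rw [hKdef]; ring
    have hψ1 : ψ (φ₁ (l*t)/φ₀ (l*t)) ≤ C * ψ (φ₁ t/φ₀ t) := hC _ _ hut hult hr1 hr2
    have hψ2 : ψ (φ₁ t/φ₀ t) ≤ C * ψ (φ₁ (l*t)/φ₀ (l*t)) := hC _ _ hult hut hr2 hr1
    have hψut := hψp _ (div_pos hp1t hp0t)
    have hψult := hψp _ (div_pos hp1lt hp0lt)
    have hxpos : 0 < φ₀ t * ψ (φ₁ t/φ₀ t) := mul_pos hp0t hψut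
    have hypos : 0 < φ₀ (l*t) * ψ (φ₁ (l*t)/φ₀ (l*t)) := mul_pos hp0lt hψult
    have hub : φ₀ (l*t) * ψ (φ₁ (l*t)/φ₀ (l*t)) ≤ (c₀*C) * (φ₀ t * ψ (φ₁ t/φ₀ t)) := by
      have h' := mul_le_mul e0u hψ1 hψult.le (by positivity : (0:ℝ) ≤ c₀ * φ₀ t)
      calc φ₀ (l*t) * ψ (φ₁ (l*t)/φ₀ (l*t)) ≤ (c₀ * φ₀ t) * (C * ψ (φ₁ t/φ₀ t)) := h'
        _ = (c₀*C) * (φ₀ t * ψ (φ₁ t/φ₀ t)) := by ring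
    have hlb : φ₀ t * ψ (φ₁ t/φ₀ t) ≤ (c₀*C) * (φ₀ (l*t) * ψ (φ₁ (l*t)/φ₀ (l*t))) := by
      have h' := mul_le_mul e0l hψ2 hψut.le
        (by positivity : (0:ℝ) ≤ c₀ * φ₀ (l*t))
      calc φ₀ t * ψ (φ₁ t/φ₀ t) ≤ (c₀ * φ₀ (l*t)) * (C * ψ (φ₁ (l*t)/φ₀ (l*t))) := h'
        _ = (c₀*C) * (φ₀ (l*t) * ψ (φ₁ (l*t)/φ₀ (l*t))) := by ring
    constructor
    · show (c₀*C)⁻¹ ≤ (φ₀ (l*t) * ψ (φ₁ (l*t)/φ₀ (l*t))) / (φ₀ t * ψ (φ₁ t/φ₀ t))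
      rw [le_div_iff₀ hxpos]
      have h' := mul_le_mul_of_nonneg_left hlb (inv_nonneg.mpr hcC0.le)
      rw [inv_mul_cancel_left₀ (ne_of_gt hcC0)] at h'
      linarith [h']
    · show (φ₀ (l*t) * ψ (φ₁ (l*t)/φ₀ (l*t))) / (φ₀ t * ψ (φ₁ t/φ₀ t)) ≤ c₀*C
      rw [div_le_iff₀ hxpos]
      linarith
end

section
/- Let s₀, s₁ ∈ ℝ with s₀ < s₁ and let ψ ∈ B. Define φ(t) := t^{s₀}·ψ(t^{s₁−s₀}) for t ≥ 1. Then ψ is pseudoconcave in a neighbourhood of infinity (equivalently, ψ is an interpolation parameter) if and only if there exist positive numbers c₀ and c₁ such that c₀·λ^{s₀} ≤ φ(λt)/φ(t) ≤ c₁·λ^{s₁} for all t ≥ 1 and all λ ≥ 1. -/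
open MeasureTheory Filter Set

theorem claimA {ψ₁ : ℝ → ℝ} {r : ℝ} (hψ₁pos : ∀ t, r < t → 0 < ψ₁ t)
    (hconc : ConcaveOn ℝ (Set.Ioi r) ψ₁) :
    ∀ x y, r < x → x ≤ y → ψ₁ x ≤ 2 * ψ₁ y := by
  intro x y hx hxy
  have hy : r < y := lt_of_lt_of_le hx hxy
  rcases eq_or_lt_of_le hxy with rfl | hlt
  · have := hψ₁pos x hx; linarith
  · have hz : r < 2*y - x := by linarith
    have h := hconc.2 (Set.mem_Ioi.2 hx) (Set.mem_Ioi.2 hz)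
      (by norm_num : (0:ℝ) ≤ 1/2) (by norm_num : (0:ℝ) ≤ 1/2) (by norm_num)
    simp only [smul_eq_mul] at h
    have he : (1/2) * x + (1/2) * (2*y - x) = y := by ring
    rw [he] at h
    have := hψ₁pos (2*y-x) hz
    linarith

theorem claimB {ψ₁ : ℝ → ℝ} {r : ℝ} (hψ₁pos : ∀ t, r < t → 0 < ψ₁ t)
    (hconc : ConcaveOn ℝ (Set.Ioi r) ψ₁) :
    ∀ x y, r < x → x ≤ y → ψ₁ y * (x - r) ≤ 2 * (y - r) * ψ₁ x := by
  intro x y hx hxy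
  have hy : r < y := lt_of_lt_of_le hx hxy
  rcases eq_or_lt_of_le hxy with rfl | hlt
  · have := hψ₁pos x hx; nlinarith
  · set w : ℝ := (r + x)/2 with hwdef
    have hw : r < w := by rw [hwdef]; linarith
    have hwx : w < x := by rw [hwdef]; linarith
    have hwy : w < y := lt_trans hwx hlt
    have hyw : (0:ℝ) < y - w := by linarith
    set a : ℝ := (y - x)/(y - w) with hadef
    set b : ℝ := (x - w)/(y - w) with hbdef
    have ha : 0 ≤ a := by apply div_nonneg <;> linarith
    have hb : 0 ≤ b := by apply div_nonneg <;> linarith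
    have hyw' : y - w ≠ 0 := ne_of_gt hyw
    have hab : a + b = 1 := by
      rw [hadef, hbdef, ← add_div, div_eq_one_iff_eq hyw']; ring
    have h := hconc.2 (Set.mem_Ioi.2 hw) (Set.mem_Ioi.2 hy) ha hb hab
    simp only [smul_eq_mul] at h
    have he : a * w + b * y = x := by
      rw [hadef, hbdef]; field_simp; ring
    rw [he] at h
    -- h : a * ψ₁ w + b * ψ₁ y ≤ ψ₁ x,  b = (x-w)/(y-w), x - w = (x-r)/2
    have hψw := hψ₁pos w hw
    have hψy := hψ₁pos y hy
    have hψx := hψ₁pos x hx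
    have h2 : b * ψ₁ y ≤ ψ₁ x := by nlinarith
    have h3 : (x - w) * ψ₁ y ≤ (y - w) * ψ₁ x := by
      rw [hbdef] at h2
      rw [div_mul_eq_mul_div, div_le_iff₀ hyw] at h2
      linarith [h2]
    have hxw : x - w = (x - r)/2 := by rw [hwdef]; ring
    nlinarith [h3]

set_option maxHeartbeats 1000000 in
theorem fwd (ψ : ℝ → ℝ)
    (hpos : ∀ t, 0 < t → 0 < ψ t)
    (hbd : ∀ a b : ℝ, 0 < a → a < b → ∃ M, ∀ t, a ≤ t → t ≤ b → ψ t ≤ M)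
    (hinv : ∀ r : ℝ, 0 < r → ∃ M, ∀ t, r ≤ t → 1 / ψ t ≤ M)
    (r : ℝ) (hr : 0 < r) (ψ₁ : ℝ → ℝ) (hψ₁pos : ∀ t, r < t → 0 < ψ₁ t)
    (hconc : ConcaveOn ℝ (Set.Ioi r) ψ₁)
    (M : ℝ) (hM : ∀ t, r < t → ψ t / ψ₁ t ≤ M ∧ ψ₁ t / ψ t ≤ M) :
    ∃ c₀ > (0:ℝ), ∃ c₁ > (0:ℝ), ∀ u, 1 ≤ u → ∀ μ, 1 ≤ μ →
      c₀ * ψ u ≤ ψ (μ * u) ∧ ψ (μ * u) ≤ c₁ * μ * ψ u := by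
  obtain ⟨T, hT⟩ : ∃ T : ℝ, T = r + 1 := ⟨r + 1, rfl⟩
  have hrT : r < T := by rw [hT]; linarith
  have hT1 : (1:ℝ) < T := by rw [hT]; linarith
  have hψT := hpos T (by linarith)
  have hψ₁T := hψ₁pos T hrT
  have hMpos : 0 < M := lt_of_lt_of_le (div_pos hψ₁T hψT) (hM T hrT).2
  -- ratio bounds in product form
  have hMub : ∀ t, r < t → ψ t ≤ M * ψ₁ t := by
    intro t htr
    have h := (hM t htr).1
    have := hψ₁pos t htr
    rwa [div_le_iff₀ this] at h
  have hMlb : ∀ t, r < t → ψ₁ t ≤ M * ψ t := by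
    intro t htr
    have h := (hM t htr).2
    have := hpos t (lt_trans hr htr)
    rwa [div_le_iff₀ this] at h
  obtain ⟨K₁, hK₁⟩ := hbd 1 T one_pos hT1
  have hK₁pos : 0 < K₁ := lt_of_lt_of_le (hpos 1 one_pos) (hK₁ 1 le_rfl (le_of_lt hT1))
  obtain ⟨K₂, hK₂⟩ := hinv 1 one_pos
  have hK₂pos : 0 < K₂ := by
    have h1 := hpos 1 one_pos
    exact lt_of_lt_of_le (by positivity) (hK₂ 1 le_rfl)
  have hK₂' : ∀ t, 1 ≤ t → 1 ≤ K₂ * ψ t := by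
    intro t ht
    have hψt := hpos t (lt_of_lt_of_le one_pos ht)
    have := hK₂ t ht
    rw [div_le_iff₀ hψt] at this
    nlinarith
  refine ⟨min (1/(2*M^2)) (1/(K₁*K₂)), by positivity,
    max (max (K₁*K₂) (2*M^2*(r+1))) (2*M*T*(ψ₁ T)*K₂), by positivity, ?_⟩
  intro u hu μ hμ
  have hu0 : (0:ℝ) < u := lt_of_lt_of_le one_pos hu
  have hμ0 : (0:ℝ) < μ := lt_of_lt_of_le one_pos hμ
  have huv : u ≤ μ * u := by nlinarith
  have hv1 : (1:ℝ) ≤ μ * u := by nlinarith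
  have hψu := hpos u hu0
  have hψv := hpos (μ*u) (by positivity)
  constructor
  · -- lower bound
    by_cases hur : r < u
    · have hvr : r < μ * u := lt_of_lt_of_le hur huv
      have h1 : ψ u ≤ M * ψ₁ u := hMub u hur
      have h2 : ψ₁ u ≤ 2 * ψ₁ (μ*u) := claimA hψ₁pos hconc u (μ*u) hur huv
      have h3 : ψ₁ (μ*u) ≤ M * ψ (μ*u) := hMlb (μ*u) hvr
      have hc : min (1/(2*M^2)) (1/(K₁*K₂)) ≤ 1/(2*M^2) := min_le_left _ _
      have hψ₁u := hψ₁pos u hur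
      have : ψ u ≤ 2*M^2 * ψ (μ*u) := by nlinarith
      have h2M : (0:ℝ) < 2*M^2 := by positivity
      calc min (1/(2*M^2)) (1/(K₁*K₂)) * ψ u ≤ (1/(2*M^2)) * ψ u :=
            mul_le_mul_of_nonneg_right hc (le_of_lt hψu)
        _ ≤ (1/(2*M^2)) * (2*M^2 * ψ (μ*u)) := by
            apply mul_le_mul_of_nonneg_left this; positivity
        _ = ψ (μ*u) := by field_simp
    · push_neg at hur
      have hψuK : ψ u ≤ K₁ := hK₁ u hu (by linarith)
      have h1 : 1 ≤ K₂ * ψ (μ*u) := hK₂' (μ*u) hv1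
      have hc : min (1/(2*M^2)) (1/(K₁*K₂)) ≤ 1/(K₁*K₂) := min_le_right _ _
      calc min (1/(2*M^2)) (1/(K₁*K₂)) * ψ u ≤ (1/(K₁*K₂)) * ψ u :=
            mul_le_mul_of_nonneg_right hc (le_of_lt hψu)
        _ ≤ ψ (μ*u) := by
            rw [div_mul_eq_mul_div, div_le_iff₀ (by positivity)]
            nlinarith
  · -- upper bound
    obtain ⟨c₁, hc₁⟩ : ∃ c₁ : ℝ, c₁ = max (max (K₁*K₂) (2*M^2*(r+1))) (2*M*T*(ψ₁ T)*K₂) := ⟨_, rfl⟩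
    rw [← hc₁]
    by_cases hur : T ≤ u
    · -- u large
      have hur' : r < u := lt_of_lt_of_le hrT hur
      have hvr : r < μ * u := lt_of_lt_of_le hur' huv
      have hB := claimB hψ₁pos hconc u (μ*u) hur' huv
      -- ψ₁ (μu) * (u - r) ≤ 2 (μu - r) ψ₁ u,  u - r ≥ 1
      have h1 : ψ (μ*u) ≤ M * ψ₁ (μ*u) := hMub (μ*u) hvr
      have h2 : ψ₁ u ≤ M * ψ u := hMlb u hur'
      have hψ₁u := hψ₁pos u hur'
      have hψ₁v := hψ₁pos (μ*u) hvr
      have hu1 : r + 1 ≤ u := by rw [hT] at hur; exact hur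
      have hur0 : (0:ℝ) < u - r := by linarith
      have hratio : μ * u - r ≤ μ * (r+1) * (u - r) := by
        nlinarith [mul_nonneg (mul_nonneg hμ0.le hr.le) (show (0:ℝ) ≤ u - r - 1 by linarith)]
      have hB2 : ψ₁ (μ*u) * (u-r) ≤ (2*μ*(r+1)*ψ₁ u) * (u-r) := by
        calc ψ₁ (μ*u) * (u-r) ≤ 2*(μ*u-r)*ψ₁ u := hB
          _ ≤ (2*μ*(r+1)*ψ₁ u) * (u-r) := by
              nlinarith [mul_le_mul_of_nonneg_right hratio hψ₁u.le]
      have hB3 : ψ₁ (μ*u) ≤ 2*μ*(r+1)*ψ₁ u := le_of_mul_le_mul_right hB2 hur0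
      have s1 : ψ (μ*u) ≤ M * (2*μ*(r+1)*ψ₁ u) :=
        h1.trans (mul_le_mul_of_nonneg_left hB3 hMpos.le)
      have s2 : M * (2*μ*(r+1)*ψ₁ u) ≤ M * (2*μ*(r+1)*(M*ψ u)) := by
        apply mul_le_mul_of_nonneg_left _ hMpos.le
        apply mul_le_mul_of_nonneg_left h2
        positivity
      have s3 : M * (2*μ*(r+1)*(M*ψ u)) = (2*M^2*(r+1)) * μ * ψ u := by ring
      have hcK : (2*M^2*(r+1)) ≤ c₁ := by rw [hc₁]; exact le_trans (le_max_right _ _) (le_max_left _ _)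
      have s4 : (2*M^2*(r+1)) * μ * ψ u ≤ c₁ * μ * ψ u := by
        apply mul_le_mul_of_nonneg_right _ hψu.le
        exact mul_le_mul_of_nonneg_right hcK hμ0.le
      linarith
    · push_neg at hur
      by_cases hvT : μ * u ≤ T
      · have hψvK : ψ (μ*u) ≤ K₁ := hK₁ (μ*u) hv1 hvT
        have h1 : 1 ≤ K₂ * ψ u := hK₂' u hu
        have hcK : K₁*K₂ ≤ c₁ := by rw [hc₁]; exact le_trans (le_max_left _ _) (le_max_left _ _)
        have hc₁pos : 0 < c₁ := lt_of_lt_of_le (by positivity) hcK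
        have s1 : K₁ ≤ K₁*K₂*ψ u := by nlinarith
        have s2 : K₁*K₂ ≤ c₁ * μ := by nlinarith
        have s3 : K₁*K₂*ψ u ≤ c₁ * μ * ψ u :=
          mul_le_mul_of_nonneg_right s2 hψu.le
        linarith
      · push_neg at hvT
        have hvr : r < μ * u := lt_trans hrT hvT
        have hB := claimB hψ₁pos hconc T (μ*u) hrT (le_of_lt hvT)
        have hTr : T - r = 1 := by rw [hT]; ring
        rw [hTr, mul_one] at hB
        have h1 : ψ (μ*u) ≤ M * ψ₁ (μ*u) := hMub (μ*u) hvr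
        have h2 : 1 ≤ K₂ * ψ u := hK₂' u hu
        have hψ₁v := hψ₁pos (μ*u) hvr
        have huT : u ≤ T := le_of_lt hur
        have hB3 : ψ₁ (μ*u) ≤ 2*μ*T*ψ₁ T := by
          have hvv : μ * u - r ≤ μ * T := by
            nlinarith [mul_le_mul_of_nonneg_left huT hμ0.le]
          nlinarith [mul_le_mul_of_nonneg_right hvv hψ₁T.le]
        have s1 : ψ (μ*u) ≤ M * (2*μ*T*ψ₁ T) :=
          h1.trans (mul_le_mul_of_nonneg_left hB3 hMpos.le)
        have s2 : M * (2*μ*T*ψ₁ T) ≤ M * (2*μ*T*ψ₁ T) * (K₂ * ψ u) := by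
          have hp : (0:ℝ) < M * (2*μ*T*ψ₁ T) := by positivity
          nlinarith
        have s3 : M * (2*μ*T*ψ₁ T) * (K₂ * ψ u) = (2*M*T*(ψ₁ T)*K₂) * μ * ψ u := by ring
        have hcK : (2*M*T*(ψ₁ T)*K₂) ≤ c₁ := by rw [hc₁]; exact le_max_right _ _
        have s4 : (2*M*T*(ψ₁ T)*K₂) * μ * ψ u ≤ c₁ * μ * ψ u :=
          mul_le_mul_of_nonneg_right
            (mul_le_mul_of_nonneg_right hcK hμ0.le) hψu.le
        linarith

theorem key (ψ : ℝ → ℝ) (hψ : BClass ψ) :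
    PseudoconcaveAtTop ψ ↔ ∃ c₀ > (0:ℝ), ∃ c₁ > (0:ℝ), ∀ u, 1 ≤ u → ∀ μ, 1 ≤ μ →
      c₀ * ψ u ≤ ψ (μ * u) ∧ ψ (μ * u) ≤ c₁ * μ * ψ u := by
  obtain ⟨hmeas, hpos, hbd, hinv⟩ := hψ
  constructor
  · rintro ⟨r, hr, ψ₁, hψ₁pos, hconc, M, hM⟩
    exact fwd ψ hpos hbd hinv r hr ψ₁ hψ₁pos hconc M hM
  · rintro ⟨c₀, hc₀, c₁, hc₁, H⟩
    set m : ℝ := min c₀ (1/c₁) with hm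
    have hmpos : 0 < m := lt_min hc₀ (by positivity)
    set ψ₁ : ℝ → ℝ := fun t => ⨅ s : {s : ℝ // 1 ≤ s}, ψ s * (1 + t / s) with hψ₁
    have hbdd : ∀ t : ℝ, 0 ≤ t →
        BddBelow (Set.range fun s : {s : ℝ // 1 ≤ s} => ψ s * (1 + t / s)) := by
      intro t ht
      refine ⟨0, ?_⟩
      rintro x ⟨⟨s, hs⟩, rfl⟩
      have hs0 : (0:ℝ) < s := lt_of_lt_of_le one_pos hs
      have := hpos s hs0
      positivity
    have hlow : ∀ t, 1 ≤ t → m * ψ t ≤ ψ₁ t := by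
      intro t ht
      refine le_ciInf ?_
      rintro ⟨s, hs⟩
      have hs0 : (0:ℝ) < s := lt_of_lt_of_le one_pos hs
      have ht0 : (0:ℝ) < t := lt_of_lt_of_le one_pos ht
      have hψs := hpos s hs0
      have hψt := hpos t ht0
      rcases le_total t s with h | h
      · have h1 : (1:ℝ) ≤ s / t := (one_le_div ht0).2 h
        have h2 := (H t ht (s/t) h1).1
        rw [div_mul_cancel₀ _ (ne_of_gt ht0)] at h2
        have h3 : m * ψ t ≤ c₀ * ψ t :=
          mul_le_mul_of_nonneg_right (min_le_left _ _) (le_of_lt hψt)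
        have h4 : (0:ℝ) ≤ t / s := by positivity
        nlinarith
      · have h1 : (1:ℝ) ≤ t / s := (one_le_div hs0).2 h
        have h2 := (H s hs (t/s) h1).2
        rw [div_mul_cancel₀ _ (ne_of_gt hs0)] at h2
        have h3 : m * ψ t ≤ (1/c₁) * ψ t :=
          mul_le_mul_of_nonneg_right (min_le_right _ _) (le_of_lt hψt)
        -- ψ t ≤ c₁ * (t/s) * ψ s, so (1/c₁) ψ t ≤ (t/s) ψ s ≤ ψ s (1 + t/s)
        have h5 : (1/c₁) * ψ t ≤ (t/s) * ψ s := by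
          rw [div_mul_eq_mul_div, div_le_iff₀ hc₁]
          nlinarith
        nlinarith
    have hup : ∀ t, 1 ≤ t → ψ₁ t ≤ 2 * ψ t := by
      intro t ht
      have ht0 : (0:ℝ) < t := lt_of_lt_of_le one_pos ht
      have h := ciInf_le (hbdd t (le_of_lt ht0)) ⟨t, ht⟩
      rw [div_self (ne_of_gt ht0)] at h
      calc ψ₁ t ≤ ψ t * (1 + 1) := h
        _ = 2 * ψ t := by ring
    refine ⟨1, one_pos, ψ₁, ?_, ?_, max (1/m) 2, ?_⟩
    · intro t ht
      have := hlow t (le_of_lt ht)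
      have := hpos t (lt_trans one_pos ht)
      nlinarith
    · refine ⟨convex_Ioi 1, ?_⟩
      intro x hx y hy a b ha hb hab
      have hx1 : (1:ℝ) ≤ x := le_of_lt hx
      have hy1 : (1:ℝ) ≤ y := le_of_lt hy
      have hx0 : (0:ℝ) ≤ x := by linarith
      have hy0 : (0:ℝ) ≤ y := by linarith
      have hxy0 : (0:ℝ) ≤ a*x + b*y := by positivity
      simp only [smul_eq_mul]
      refine le_ciInf ?_
      rintro ⟨s, hs⟩
      have hs0 : (0:ℝ) < s := lt_of_lt_of_le one_pos hs
      have hb' : b = 1 - a := by linarith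
      have hkey : ψ s * (1 + (a*x+b*y)/s)
          = a * (ψ s * (1 + x/s)) + b * (ψ s * (1 + y/s)) := by
        subst hb'; field_simp; ring
      rw [hkey]
      have h1 : ψ₁ x ≤ ψ s * (1 + x/s) := ciInf_le (hbdd x hx0) ⟨s, hs⟩
      have h2 : ψ₁ y ≤ ψ s * (1 + y/s) := ciInf_le (hbdd y hy0) ⟨s, hs⟩
      have := mul_le_mul_of_nonneg_left h1 ha
      have := mul_le_mul_of_nonneg_left h2 hb
      linarith
    · intro t ht
      have ht1 : (1:ℝ) ≤ t := le_of_lt ht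
      have hψt := hpos t (lt_trans one_pos ht)
      have hl := hlow t ht1
      have hu := hup t ht1
      have hψ₁t : 0 < ψ₁ t := by nlinarith
      constructor
      · have : ψ t / ψ₁ t ≤ 1/m := by
          rw [div_le_div_iff₀ hψ₁t hmpos]
          nlinarith
        exact le_trans this (le_max_left _ _)
      · have : ψ₁ t / ψ t ≤ 2 := by
          rw [div_le_iff₀ hψt]; linarith
        exact le_trans this (le_max_right _ _)


/-- For `s₀ < s₁` and `ψ ∈ B`, setting `φ(t) = t^{s₀} ψ(t^{s₁-s₀})`, the function `ψ` is
pseudoconcave in a neighbourhood of infinity (i.e. an interpolation parameter) if and only if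
there exist `c₀, c₁ > 0` with `c₀ λ^{s₀} ≤ φ(λt)/φ(t) ≤ c₁ λ^{s₁}` for all `t ≥ 1`, `λ ≥ 1`. -/
theorem interpolation_parameter_iff_regularity (s₀ s₁ : ℝ) (hs : s₀ < s₁)
    (ψ : ℝ → ℝ) (hψ : BClass ψ) :
    PseudoconcaveAtTop ψ ↔
      ∃ c₀ > (0 : ℝ), ∃ c₁ > (0 : ℝ), ∀ t : ℝ, 1 ≤ t → ∀ l : ℝ, 1 ≤ l →
        c₀ * l ^ s₀ ≤ ((l * t) ^ s₀ * ψ ((l * t) ^ (s₁ - s₀))) / (t ^ s₀ * ψ (t ^ (s₁ - s₀))) ∧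
        ((l * t) ^ s₀ * ψ ((l * t) ^ (s₁ - s₀))) / (t ^ s₀ * ψ (t ^ (s₁ - s₀))) ≤ c₁ * l ^ s₁ := by
  have hσ : 0 < s₁ - s₀ := sub_pos.2 hs
  have hpos := hψ.2.1
  rw [key ψ hψ]
  constructor
  · rintro ⟨c₀, hc₀, c₁, hc₁, H⟩
    refine ⟨c₀, hc₀, c₁, hc₁, fun t ht l hl => ?_⟩
    have ht0 : (0:ℝ) < t := lt_of_lt_of_le one_pos ht
    have hl0 : (0:ℝ) < l := lt_of_lt_of_le one_pos hl
    have hu : 1 ≤ t ^ (s₁ - s₀) := Real.one_le_rpow ht hσ.le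
    have hμ : 1 ≤ l ^ (s₁ - s₀) := Real.one_le_rpow hl hσ.le
    have hψu := hpos _ (lt_of_lt_of_le one_pos hu)
    obtain ⟨h1, h2⟩ := H _ hu _ hμ
    have hrw1 : (l*t) ^ (s₁ - s₀) = l^(s₁-s₀) * t^(s₁-s₀) := Real.mul_rpow hl0.le ht0.le
    have hrw2 : (l*t) ^ s₀ = l^s₀ * t^s₀ := Real.mul_rpow hl0.le ht0.le
    have hts : (0:ℝ) < t ^ s₀ := Real.rpow_pos_of_pos ht0 _
    have hls : (0:ℝ) < l ^ s₀ := Real.rpow_pos_of_pos hl0 _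
    rw [hrw1, hrw2]
    have hratio : (l^s₀ * t^s₀ * ψ (l^(s₁-s₀) * t^(s₁-s₀))) / (t^s₀ * ψ (t^(s₁-s₀)))
        = l^s₀ * (ψ (l^(s₁-s₀) * t^(s₁-s₀)) / ψ (t^(s₁-s₀))) := by
      field_simp
    rw [hratio]
    constructor
    · have hq : c₀ ≤ ψ (l^(s₁-s₀) * t^(s₁-s₀)) / ψ (t^(s₁-s₀)) := by
        rw [le_div_iff₀ hψu]; linarith [h1]
      calc c₀ * l^s₀ = l^s₀ * c₀ := by ring
        _ ≤ l^s₀ * (ψ (l^(s₁-s₀) * t^(s₁-s₀)) / ψ (t^(s₁-s₀))) :=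
            mul_le_mul_of_nonneg_left hq hls.le
    · have hd : ψ (l^(s₁-s₀) * t^(s₁-s₀)) / ψ (t^(s₁-s₀)) ≤ c₁ * l^(s₁-s₀) := by
        rw [div_le_iff₀ hψu]; linarith [h2]
      calc l^s₀ * (ψ (l^(s₁-s₀) * t^(s₁-s₀)) / ψ (t^(s₁-s₀)))
          ≤ l^s₀ * (c₁ * l^(s₁-s₀)) := mul_le_mul_of_nonneg_left hd hls.le
        _ = c₁ * (l^(s₀ + (s₁-s₀))) := by rw [Real.rpow_add hl0]; ring
        _ = c₁ * l ^ s₁ := by norm_num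
  · rintro ⟨c₀, hc₀, c₁, hc₁, H⟩
    refine ⟨c₀, hc₀, c₁, hc₁, fun u hu μ hμ => ?_⟩
    have hu0 : (0:ℝ) < u := lt_of_lt_of_le one_pos hu
    have hμ0 : (0:ℝ) < μ := lt_of_lt_of_le one_pos hμ
    have hinvpos : (0:ℝ) ≤ (s₁-s₀)⁻¹ := by positivity
    have ht : 1 ≤ u ^ (s₁-s₀)⁻¹ := Real.one_le_rpow hu hinvpos
    have hl : 1 ≤ μ ^ (s₁-s₀)⁻¹ := Real.one_le_rpow hμ hinvpos
    have ht0 : (0:ℝ) < u ^ (s₁-s₀)⁻¹ := Real.rpow_pos_of_pos hu0 _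
    have hl0 : (0:ℝ) < μ ^ (s₁-s₀)⁻¹ := Real.rpow_pos_of_pos hμ0 _
    have htσ : (u ^ (s₁-s₀)⁻¹) ^ (s₁-s₀) = u := by
      rw [← Real.rpow_mul hu0.le, inv_mul_cancel₀ (ne_of_gt hσ), Real.rpow_one]
    have hlσ : (μ ^ (s₁-s₀)⁻¹) ^ (s₁-s₀) = μ := by
      rw [← Real.rpow_mul hμ0.le, inv_mul_cancel₀ (ne_of_gt hσ), Real.rpow_one]
    obtain ⟨h1, h2⟩ := H _ ht _ hl
    have hrw1 : (μ ^ (s₁-s₀)⁻¹ * u ^ (s₁-s₀)⁻¹) ^ (s₁-s₀) = μ * u := by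
      rw [Real.mul_rpow hl0.le ht0.le, htσ, hlσ]
    have hrw2 : (μ ^ (s₁-s₀)⁻¹ * u ^ (s₁-s₀)⁻¹) ^ s₀
        = (μ ^ (s₁-s₀)⁻¹) ^ s₀ * (u ^ (s₁-s₀)⁻¹) ^ s₀ := Real.mul_rpow hl0.le ht0.le
    rw [hrw1, hrw2, htσ] at h1 h2
    have hψu := hpos u hu0
    have hψv := hpos (μ * u) (by positivity)
    have hts : (0:ℝ) < (u ^ (s₁-s₀)⁻¹) ^ s₀ := Real.rpow_pos_of_pos ht0 _
    have hls : (0:ℝ) < (μ ^ (s₁-s₀)⁻¹) ^ s₀ := Real.rpow_pos_of_pos hl0 _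
    have hratio : ((μ ^ (s₁-s₀)⁻¹) ^ s₀ * (u ^ (s₁-s₀)⁻¹) ^ s₀ * ψ (μ * u))
        / ((u ^ (s₁-s₀)⁻¹) ^ s₀ * ψ u)
        = (μ ^ (s₁-s₀)⁻¹) ^ s₀ * (ψ (μ * u) / ψ u) := by
      field_simp
    rw [hratio] at h1 h2
    constructor
    · have hq : c₀ ≤ ψ (μ * u) / ψ u := by
        have := mul_le_mul_of_nonneg_left (le_refl ((μ ^ (s₁-s₀)⁻¹) ^ s₀)) (le_refl (0:ℝ))
        -- cancel the positive factor
        have h1' : (μ ^ (s₁-s₀)⁻¹) ^ s₀ * c₀ ≤ (μ ^ (s₁-s₀)⁻¹) ^ s₀ * (ψ (μ * u) / ψ u) := by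
          calc (μ ^ (s₁-s₀)⁻¹) ^ s₀ * c₀ = c₀ * (μ ^ (s₁-s₀)⁻¹) ^ s₀ := by ring
            _ ≤ _ := h1
        exact le_of_mul_le_mul_left h1' hls
      rw [le_div_iff₀ hψu] at hq
      linarith
    · have hlσ' : (μ ^ (s₁-s₀)⁻¹) ^ s₁ = (μ ^ (s₁-s₀)⁻¹) ^ s₀ * μ := by
        calc (μ ^ (s₁-s₀)⁻¹) ^ s₁ = (μ ^ (s₁-s₀)⁻¹) ^ (s₀ + (s₁ - s₀)) := by norm_num
          _ = (μ ^ (s₁-s₀)⁻¹) ^ s₀ * (μ ^ (s₁-s₀)⁻¹) ^ (s₁-s₀) := Real.rpow_add hl0 _ _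
          _ = (μ ^ (s₁-s₀)⁻¹) ^ s₀ * μ := by rw [hlσ]
      rw [hlσ'] at h2
      have h2' : (μ ^ (s₁-s₀)⁻¹) ^ s₀ * (ψ (μ * u) / ψ u)
          ≤ (μ ^ (s₁-s₀)⁻¹) ^ s₀ * (c₁ * μ) := by
        calc (μ ^ (s₁-s₀)⁻¹) ^ s₀ * (ψ (μ * u) / ψ u) ≤ c₁ * ((μ ^ (s₁-s₀)⁻¹) ^ s₀ * μ) := h2
          _ = (μ ^ (s₁-s₀)⁻¹) ^ s₀ * (c₁ * μ) := by ring
      have hq : ψ (μ * u) / ψ u ≤ c₁ * μ := le_of_mul_le_mul_left h2' hls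
      rw [div_le_iff₀ hψu] at hq
      linarith
end

section
/- Let φ ∈ OR and let real numbers s₀ < s₁ and positive numbers c₀, c₁ satisfy c₀·λ^{s₀} ≤ φ(λt)/φ(t) ≤ c₁·λ^{s₁} for all t ≥ 1 and λ ≥ 1. Define ψ : (0,∞) → (0,∞) by ψ(τ) := τ^{−s₀/(s₁−s₀)}·φ(τ^{1/(s₁−s₀)}) for τ ≥ 1 and ψ(τ) := φ(1) for 0 < τ < 1. Then ψ belongs to the class B and is pseudoconcave in a neighbourhood of infinity (equivalently, ψ is an interpolation parameter). -/
open MeasureTheory Filter Set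

set_option maxHeartbeats 1600000 in
/-- If `φ ∈ OR` satisfies `c₀ λ^{s₀} ≤ φ(λt)/φ(t) ≤ c₁ λ^{s₁}` for all `t ≥ 1`, `λ ≥ 1`
(with `s₀ < s₁`, `c₀,c₁ > 0`), then `ψ(τ) := τ^{-s₀/(s₁-s₀)} φ(τ^{1/(s₁-s₀)})` for `τ ≥ 1`,
`ψ(τ) := φ(1)` for `0 < τ < 1`, belongs to `B` and is pseudoconcave in a neighbourhood of
infinity (i.e. is an interpolation parameter). -/
theorem interpolation_parameter_of_regularity (φ : ℝ → ℝ) (hφ : ORClass φ)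
    (s₀ s₁ : ℝ) (hs : s₀ < s₁) (c₀ c₁ : ℝ) (hc₀ : 0 < c₀) (hc₁ : 0 < c₁)
    (hest : ∀ t : ℝ, 1 ≤ t → ∀ l : ℝ, 1 ≤ l →
      c₀ * l ^ s₀ ≤ φ (l * t) / φ t ∧ φ (l * t) / φ t ≤ c₁ * l ^ s₁) :
    BClass (fun τ => if 1 ≤ τ then τ ^ (-(s₀ / (s₁ - s₀))) * φ (τ ^ (1 / (s₁ - s₀))) else φ 1) ∧
    PseudoconcaveAtTop
      (fun τ => if 1 ≤ τ then τ ^ (-(s₀ / (s₁ - s₀))) * φ (τ ^ (1 / (s₁ - s₀))) else φ 1) := by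
  obtain ⟨hmeas, hposφ, -⟩ := hφ
  have hd : (0:ℝ) < s₁ - s₀ := sub_pos.2 hs
  have hd' : s₁ - s₀ ≠ 0 := hd.ne'
  set σ : ℝ := s₀ / (s₁ - s₀) with hσdef
  set ε : ℝ := 1 / (s₁ - s₀) with hεdef
  have hεpos : 0 < ε := by rw [hεdef]; positivity
  set ψ : ℝ → ℝ := fun τ => if 1 ≤ τ then τ ^ (-σ) * φ (τ ^ ε) else φ 1 with hψdef
  have hφ1 : 0 < φ 1 := hposφ 1 le_rfl
  have hrge : ∀ t : ℝ, 1 ≤ t → 1 ≤ t ^ ε := by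
    intro t ht
    calc (1:ℝ) = 1 ^ ε := (Real.one_rpow ε).symm
    _ ≤ t ^ ε := Real.rpow_le_rpow zero_le_one ht hεpos.le
  have hψ_eq : ∀ t : ℝ, 1 ≤ t → ψ t = t ^ (-σ) * φ (t ^ ε) := by
    intro t ht
    simp only [hψdef]
    rw [if_pos ht]
  have hψpos : ∀ t : ℝ, 0 < t → 0 < ψ t := by
    intro t ht
    by_cases h : 1 ≤ t
    · rw [hψ_eq t h]
      exact mul_pos (Real.rpow_pos_of_pos ht _) (hposφ _ (hrge t h))
    · simpa [hψdef, h] using hφ1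
  have hψ1 : ψ 1 = φ 1 := by simp [hψdef, Real.one_rpow]
  have hεs₀ : ε * s₀ = σ := by
    rw [hεdef, hσdef, div_mul_eq_mul_div, one_mul]
  have hεs₁ : ε * s₁ = σ + 1 := by
    rw [hεdef, hσdef, div_mul_eq_mul_div, one_mul]
    field_simp
    ring
  have key : ∀ τ : ℝ, 1 ≤ τ → ∀ μ : ℝ, 1 ≤ μ →
      c₀ * ψ τ ≤ ψ (μ * τ) ∧ ψ (μ * τ) ≤ c₁ * μ * ψ τ := by
    intro τ hτ μ hμ
    have hτ0 : (0:ℝ) < τ := lt_of_lt_of_le one_pos hτ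
    have hμ0 : (0:ℝ) < μ := lt_of_lt_of_le one_pos hμ
    have hμτ : (1:ℝ) ≤ μ * τ := le_trans hτ (le_mul_of_one_le_left hτ0.le hμ)
    have hF : 0 < φ (τ ^ ε) := hposφ _ (hrge τ hτ)
    obtain ⟨hl, hu⟩ := hest (τ ^ ε) (hrge τ hτ) (μ ^ ε) (hrge μ hμ)
    have hmul : (μ * τ) ^ ε = μ ^ ε * τ ^ ε := Real.mul_rpow hμ0.le hτ0.le
    have hmul' : (μ * τ) ^ (-σ) = μ ^ (-σ) * τ ^ (-σ) := Real.mul_rpow hμ0.le hτ0.le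
    have hexp0 : (μ ^ ε) ^ s₀ = μ ^ σ := by rw [← Real.rpow_mul hμ0.le, hεs₀]
    have hexp1 : (μ ^ ε) ^ s₁ = μ ^ σ * μ := by
      rw [← Real.rpow_mul hμ0.le, hεs₁, Real.rpow_add hμ0, Real.rpow_one]
    have hA0 : 0 < μ ^ σ := Real.rpow_pos_of_pos hμ0 _
    have hAneg : μ ^ (-σ) = (μ ^ σ)⁻¹ := Real.rpow_neg hμ0.le _
    have hGl : c₀ * μ ^ σ * φ (τ ^ ε) ≤ φ (μ ^ ε * τ ^ ε) := by
      rw [hexp0] at hl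
      exact (le_div_iff₀ hF).mp hl
    have hGu : φ (μ ^ ε * τ ^ ε) ≤ c₁ * (μ ^ σ * μ) * φ (τ ^ ε) := by
      rw [hexp1] at hu
      exact (div_le_iff₀ hF).mp hu
    have hψμτ : ψ (μ * τ) = (μ ^ σ)⁻¹ * (τ ^ (-σ) * φ (μ ^ ε * τ ^ ε)) := by
      rw [hψ_eq _ hμτ, hmul, hmul', hAneg]; ring
    have hB0 : (0:ℝ) ≤ τ ^ (-σ) := (Real.rpow_pos_of_pos hτ0 _).le
    constructor
    · rw [hψ_eq τ hτ, hψμτ]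
      calc c₀ * (τ ^ (-σ) * φ (τ ^ ε))
          = (μ ^ σ)⁻¹ * (τ ^ (-σ) * (c₀ * μ ^ σ * φ (τ ^ ε))) := by
            field_simp
        _ ≤ (μ ^ σ)⁻¹ * (τ ^ (-σ) * φ (μ ^ ε * τ ^ ε)) := by
            exact mul_le_mul_of_nonneg_left
              (mul_le_mul_of_nonneg_left hGl hB0) (inv_nonneg.2 hA0.le)
    · rw [hψ_eq τ hτ, hψμτ]
      calc (μ ^ σ)⁻¹ * (τ ^ (-σ) * φ (μ ^ ε * τ ^ ε))
          ≤ (μ ^ σ)⁻¹ * (τ ^ (-σ) * (c₁ * (μ ^ σ * μ) * φ (τ ^ ε))) := by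
            exact mul_le_mul_of_nonneg_left
              (mul_le_mul_of_nonneg_left hGu hB0) (inv_nonneg.2 hA0.le)
        _ = c₁ * μ * (τ ^ (-σ) * φ (τ ^ ε)) := by
            field_simp
  have hup : ∀ t : ℝ, 1 ≤ t → ψ t ≤ c₁ * t * φ 1 := by
    intro t ht
    have h := (key 1 le_rfl t ht).2
    rwa [mul_one, hψ1] at h
  have hlow : ∀ t : ℝ, 1 ≤ t → c₀ * φ 1 ≤ ψ t := by
    intro t ht
    have h := (key 1 le_rfl t ht).1
    rwa [mul_one, hψ1] at h
  have hBmeas : Measurable ψ := by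
    rw [hψdef]
    refine Measurable.ite measurableSet_Ici ?_ measurable_const
    apply Measurable.mul
    · measurability
    · exact hmeas.comp (by measurability)
  have hBclass : BClass ψ := by
    refine ⟨hBmeas, hψpos, ?_, ?_⟩
    · intro a b _ hab
      refine ⟨max (φ 1) (c₁ * b * φ 1), ?_⟩
      intro t _ htb
      by_cases h1 : 1 ≤ t
      · have h2 := hup t h1
        have h3 : c₁ * t * φ 1 ≤ c₁ * b * φ 1 :=
          mul_le_mul_of_nonneg_right (mul_le_mul_of_nonneg_left htb hc₁.le) hφ1.le
        exact le_trans (le_trans h2 h3) (le_max_right _ _)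
      · simp only [hψdef, if_neg h1]
        exact le_max_left _ _
    · intro r _
      refine ⟨max (1 / (c₀ * φ 1)) (1 / φ 1), ?_⟩
      intro t _
      by_cases h1 : 1 ≤ t
      · have h2 := hlow t h1
        have h3 : 1 / ψ t ≤ 1 / (c₀ * φ 1) := by
          apply one_div_le_one_div_of_le (by positivity) h2
        exact le_trans h3 (le_max_left _ _)
      · simp only [hψdef, if_neg h1]
        exact le_max_right _ _
  set ψ₁ : ℝ → ℝ := fun t => sInf ((fun τ => ψ τ * (1 + t / τ)) '' Set.Ici 1) with hψ₁def
  have hne : ∀ t : ℝ, ((fun τ => ψ τ * (1 + t / τ)) '' Set.Ici 1).Nonempty :=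
    fun t => ⟨_, Set.mem_image_of_mem _ Set.self_mem_Ici⟩
  have hbdd : ∀ t : ℝ, 0 < t → BddBelow ((fun τ => ψ τ * (1 + t / τ)) '' Set.Ici 1) := by
    intro t ht
    refine ⟨0, ?_⟩
    rintro z ⟨τ, hτ, rfl⟩
    have h1 : 0 < ψ τ := hψpos τ (lt_of_lt_of_le one_pos hτ)
    have h2 : 0 ≤ t / τ := div_nonneg ht.le (le_trans zero_le_one hτ)
    have : (0:ℝ) ≤ 1 + t / τ := by linarith
    exact mul_nonneg h1.le this
  have hm : 0 < min c₀ c₁⁻¹ := lt_min hc₀ (inv_pos.2 hc₁)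
  set m := min c₀ c₁⁻¹ with hmdef
  have hAbound : ∀ t : ℝ, 1 ≤ t → ∀ τ : ℝ, 1 ≤ τ → m * ψ t ≤ ψ τ * (1 + t / τ) := by
    intro t ht τ hτ
    have hτ0 : (0:ℝ) < τ := lt_of_lt_of_le one_pos hτ
    have ht0 : (0:ℝ) < t := lt_of_lt_of_le one_pos ht
    have hψt : 0 < ψ t := hψpos t ht0
    have hψτ : 0 < ψ τ := hψpos τ hτ0
    rcases le_total τ t with h | h
    · have hμ : (1:ℝ) ≤ t / τ := (one_le_div hτ0).2 h
      have hk := (key τ hτ (t / τ) hμ).2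
      rw [div_mul_cancel₀ t hτ0.ne'] at hk
      have h1 : m * ψ t ≤ c₁⁻¹ * ψ t := mul_le_mul_of_nonneg_right (min_le_right _ _) hψt.le
      have h2 : c₁⁻¹ * ψ t ≤ t / τ * ψ τ := by
        rw [inv_mul_le_iff₀ hc₁]
        linarith
      have h3 : t / τ * ψ τ ≤ ψ τ * (1 + t / τ) := by nlinarith [hψτ.le]
      linarith
    · have hμ : (1:ℝ) ≤ τ / t := (one_le_div ht0).2 h
      have hk := (key t ht (τ / t) hμ).1
      rw [div_mul_cancel₀ τ ht0.ne'] at hk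
      have h1 : m * ψ t ≤ c₀ * ψ t := mul_le_mul_of_nonneg_right (min_le_left _ _) hψt.le
      have h2 : (0:ℝ) ≤ t / τ := div_nonneg ht0.le hτ0.le
      have h3 : ψ τ ≤ ψ τ * (1 + t / τ) :=
        le_mul_of_one_le_right hψτ.le (by linarith)
      linarith
  have hψ₁low : ∀ t : ℝ, 1 ≤ t → m * ψ t ≤ ψ₁ t := by
    intro t ht
    apply le_csInf (hne t)
    rintro z ⟨τ, hτ, rfl⟩
    exact hAbound t ht τ hτ
  have hψ₁up : ∀ t : ℝ, 1 ≤ t → ψ₁ t ≤ 2 * ψ t := by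
    intro t ht
    have ht0 : (0:ℝ) < t := lt_of_lt_of_le one_pos ht
    have h : ψ₁ t ≤ ψ t * (1 + t / t) := csInf_le (hbdd t ht0) ⟨t, ht, rfl⟩
    rw [div_self ht0.ne'] at h
    calc ψ₁ t ≤ ψ t * (1 + 1) := h
    _ = 2 * ψ t := by ring
  have hψ₁pos : ∀ t : ℝ, (1:ℝ) < t → 0 < ψ₁ t := by
    intro t ht
    exact lt_of_lt_of_le (mul_pos hm (hψpos t (lt_trans one_pos ht))) (hψ₁low t ht.le)
  have hconc : ConcaveOn ℝ (Set.Ioi 1) ψ₁ := by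
    refine ⟨convex_Ioi 1, ?_⟩
    intro x hx y hy a b ha hb hab
    simp only [smul_eq_mul]
    have hx0 : (0:ℝ) < x := lt_trans one_pos hx
    have hy0 : (0:ℝ) < y := lt_trans one_pos hy
    apply le_csInf (hne _)
    rintro z ⟨τ, hτ, rfl⟩
    show a * ψ₁ x + b * ψ₁ y ≤ ψ τ * (1 + (a * x + b * y) / τ)
    have e : ψ τ * (1 + (a * x + b * y) / τ)
        = a * (ψ τ * (1 + x / τ)) + b * (ψ τ * (1 + y / τ)) := by
      calc ψ τ * (1 + (a * x + b * y) / τ)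
          = ψ τ * ((a + b) + (a * x + b * y) / τ) := by rw [hab]
        _ = a * (ψ τ * (1 + x / τ)) + b * (ψ τ * (1 + y / τ)) := by ring
    rw [e]
    have l1 : ψ₁ x ≤ ψ τ * (1 + x / τ) :=
      csInf_le (hbdd x hx0) (Set.mem_image_of_mem _ hτ)
    have l2 : ψ₁ y ≤ ψ τ * (1 + y / τ) :=
      csInf_le (hbdd y hy0) (Set.mem_image_of_mem _ hτ)
    exact add_le_add (mul_le_mul_of_nonneg_left l1 ha) (mul_le_mul_of_nonneg_left l2 hb)
  refine ⟨hBclass, 1, one_pos, ψ₁, hψ₁pos, hconc, max m⁻¹ 2, ?_⟩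
  intro t ht
  have ht1 : (1:ℝ) ≤ t := ht.le
  have hψt : 0 < ψ t := hψpos t (lt_trans one_pos ht)
  have hψ₁t : 0 < ψ₁ t := hψ₁pos t ht
  constructor
  · have h1 := mul_le_mul_of_nonneg_left (hψ₁low t ht1) (inv_nonneg.2 hm.le)
    rw [← mul_assoc, inv_mul_cancel₀ hm.ne', one_mul] at h1
    exact le_trans ((div_le_iff₀ hψ₁t).2 h1) (le_max_left _ _)
  · exact le_trans ((div_le_iff₀ hψt).2 (hψ₁up t ht1)) (le_max_right _ _)
end

section
/- Let φ ∈ OR, let r ≥ 0 be a real number, and assume that ∫₁^∞ τ^{r}/φ(τ)² dτ < ∞. Define η(t) := ∫ₜ^∞ τ^{r}/φ(τ)² dτ for t ≥ 1. Then η maps [1,∞) into (0,∞) and η belongs to the class OR. -/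
open MeasureTheory Filter Set

/-- If `φ ∈ OR`, `r ≥ 0`, and `∫₁^∞ τ^r/φ(τ)² dτ < ∞`, then the function
`η(t) := ∫ₜ^∞ τ^r/φ(τ)² dτ` maps `[1,∞)` into `(0,∞)` and belongs to `OR`. -/
theorem or_of_tail_integral (φ : ℝ → ℝ) (hφ : ORClass φ) (r : ℝ) (hr : 0 ≤ r)
    (hint : IntegrableOn (fun τ : ℝ => τ ^ r / (φ τ) ^ 2) (Set.Ici (1 : ℝ))) :
    (∀ t : ℝ, 1 ≤ t → 0 < ∫ τ in Set.Ici t, τ ^ r / (φ τ) ^ 2) ∧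
      ORClass (fun t => ∫ τ in Set.Ici t, τ ^ r / (φ τ) ^ 2) := by
  obtain ⟨hφm, hφpos, a, ha, c, hc, hORφ⟩ := hφ
  set f : ℝ → ℝ := fun τ => τ ^ r / (φ τ) ^ 2 with hfdef
  have hc0 : (0:ℝ) < c := lt_of_lt_of_le one_pos hc
  have hfm : Measurable f := by
    exact (Real.continuous_rpow_const hr).measurable.div (hφm.pow_const 2)
  have hfpos : ∀ τ : ℝ, 1 ≤ τ → 0 < f τ := fun τ hτ =>
    div_pos (Real.rpow_pos_of_pos (by linarith) r) (pow_pos (hφpos τ hτ) 2)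
  -- positivity of the tail integral
  have hpos : ∀ t : ℝ, 1 ≤ t → 0 < ∫ τ in Set.Ici t, f τ := by
    intro t ht
    have hi : IntegrableOn f (Set.Ici t) := hint.mono_set (Ici_subset_Ici.mpr ht)
    have hnn : 0 ≤ᵐ[volume.restrict (Set.Ici t)] f :=
      (ae_restrict_iff' measurableSet_Ici).2
        (Filter.Eventually.of_forall fun τ hτ => (hfpos τ (ht.trans hτ)).le)
    rw [setIntegral_pos_iff_support_of_nonneg_ae hnn hi]
    have hsub : Set.Ici t ⊆ Function.support f ∩ Set.Ici t :=
      fun τ hτ => ⟨(hfpos τ (ht.trans hτ)).ne', hτ⟩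
    refine lt_of_lt_of_le ?_ (measure_mono hsub)
    simp [Real.volume_Ici]
  -- measurability of the tail integral
  have hη_meas : Measurable fun t : ℝ => ∫ τ in Set.Ici t, f τ := by
    have h1 : StronglyMeasurable fun p : ℝ × ℝ => (Set.Ici p.1).indicator f p.2 := by
      apply Measurable.stronglyMeasurable
      have heq : (fun p : ℝ × ℝ => (Set.Ici p.1).indicator f p.2)
          = fun p : ℝ × ℝ => if p.1 ≤ p.2 then f p.2 else 0 := by
        ext p; simp [Set.indicator_apply, Set.mem_Ici]
      rw [heq]
      exact Measurable.ite (measurableSet_le measurable_fst measurable_snd)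
        (hfm.comp measurable_snd) measurable_const
    have h2 := h1.integral_prod_right' (ν := volume)
    have heq : (fun t : ℝ => ∫ τ in Set.Ici t, f τ)
        = fun t : ℝ => ∫ τ, (Set.Ici t).indicator f τ := by
      ext t; rw [integral_indicator measurableSet_Ici]
    rw [heq]
    exact h2.measurable
  -- the key two-sided estimate
  have key : ∀ t : ℝ, 1 ≤ t → ∀ l : ℝ, 1 ≤ l → l ≤ a →
      ((c ^ 2)⁻¹ * ∫ τ in Set.Ici t, f τ) ≤ (∫ τ in Set.Ici (l * t), f τ) ∧
        (∫ τ in Set.Ici (l * t), f τ) ≤ ∫ τ in Set.Ici t, f τ := by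
    intro t ht l hl hla
    have hl0 : (0:ℝ) < l := lt_of_lt_of_le one_pos hl
    have ht0 : (0:ℝ) < t := lt_of_lt_of_le one_pos ht
    have hlt : t ≤ l * t := le_mul_of_one_le_left ht0.le hl
    have hi : IntegrableOn f (Set.Ici t) := hint.mono_set (Ici_subset_Ici.mpr ht)
    have hnn : 0 ≤ᵐ[volume.restrict (Set.Ici t)] f :=
      (ae_restrict_iff' measurableSet_Ici).2
        (Filter.Eventually.of_forall fun τ hτ => (hfpos τ (ht.trans hτ)).le)
    constructor
    · -- lower bound via change of variables
      have hi_lt : IntegrableOn f (Set.Ioi (l * t)) :=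
        (hint.mono_set (Ici_subset_Ici.mpr (ht.trans hlt))).mono_set Ioi_subset_Ici_self
      have hi_t : IntegrableOn f (Set.Ioi t) := hi.mono_set Ioi_subset_Ici_self
      have hi_comp : IntegrableOn (fun s => f (l * s)) (Set.Ioi t) :=
        (integrableOn_Ioi_comp_mul_left_iff f t hl0).mpr hi_lt
      have e1 : (∫ τ in Set.Ici (l * t), f τ) = l * ∫ s in Set.Ioi t, f (l * s) := by
        rw [integral_Ici_eq_integral_Ioi, integral_comp_mul_left_Ioi f t hl0,
          smul_eq_mul, ← mul_assoc, mul_inv_cancel₀ hl0.ne', one_mul]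
      have hptwise : ∀ s ∈ Set.Ioi t, (c ^ 2)⁻¹ * f s ≤ f (l * s) := by
        intro s hs
        have hs1 : (1:ℝ) ≤ s := ht.trans (le_of_lt hs)
        have hs0 : (0:ℝ) < s := lt_of_lt_of_le one_pos hs1
        have hls1 : (1:ℝ) ≤ l * s := le_trans hs1 (le_mul_of_one_le_left hs0.le hl)
        have hφs := hφpos s hs1
        have hφls := hφpos (l * s) hls1
        have hub := (hORφ s hs1 l hl hla).2
        have h1 : φ (l * s) ≤ c * φ s := (div_le_iff₀ hφs).1 hub
        have h2 : φ (l * s) ^ 2 ≤ c ^ 2 * φ s ^ 2 := by nlinarith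
        have hnum : s ^ r ≤ (l * s) ^ r :=
          Real.rpow_le_rpow hs0.le (le_mul_of_one_le_left hs0.le hl) hr
        have he : (c ^ 2)⁻¹ * f s = s ^ r / (c ^ 2 * φ s ^ 2) := by
          simp only [hfdef]
          field_simp
        rw [he]
        exact div_le_div₀ (Real.rpow_pos_of_pos (by linarith) r).le hnum
          (pow_pos hφls 2) h2
      have hmono : ((c ^ 2)⁻¹ * ∫ s in Set.Ioi t, f s) ≤ ∫ s in Set.Ioi t, f (l * s) := by
        rw [← integral_const_mul]
        exact setIntegral_mono_on (hi_t.const_mul _) hi_comp measurableSet_Ioi hptwise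
      have hnn' : 0 ≤ ∫ s in Set.Ioi t, f (l * s) :=
        setIntegral_nonneg measurableSet_Ioi fun s hs =>
          (hfpos (l * s) (le_trans (ht.trans (le_of_lt hs))
            (le_mul_of_one_le_left (by linarith [ht.trans (le_of_lt hs)]) hl))).le
      calc ((c ^ 2)⁻¹ * ∫ τ in Set.Ici t, f τ)
          = (c ^ 2)⁻¹ * ∫ s in Set.Ioi t, f s := by rw [integral_Ici_eq_integral_Ioi]
        _ ≤ ∫ s in Set.Ioi t, f (l * s) := hmono
        _ ≤ l * ∫ s in Set.Ioi t, f (l * s) := le_mul_of_one_le_left hnn' hl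
        _ = ∫ τ in Set.Ici (l * t), f τ := e1.symm
    · exact setIntegral_mono_set hi hnn
        (HasSubset.Subset.eventuallyLE (Ici_subset_Ici.mpr hlt))
  refine ⟨hpos, hη_meas, fun t ht => hpos t ht, a, ha, c ^ 2, one_le_pow₀ hc, ?_⟩
  intro t ht l hl hla
  have h := key t ht l hl hla
  have hηt := hpos t ht
  constructor
  · exact (le_div_iff₀ hηt).2 h.1
  · exact le_trans ((div_le_one hηt).2 h.2) (one_le_pow₀ hc)
end

section
/- Let q ≥ 0 and n ≥ 1 be integers and let φ ∈ OR satisfy ∫₁^∞ t^{2q+n−1}/φ(t)² dt < ∞. Then there exist functions φ₁, φ₂ ∈ OR such that φ(t) = φ₁(t)·φ₂(t) for all t ≥ 1, φ₁(t) → ∞ as t → ∞, and ∫₁^∞ t^{2q+n−1}/φ₂(t)² dt < ∞. -/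
open MeasureTheory Filter Set Topology

lemma orclass_two {φ : ℝ → ℝ} (hφ : ORClass φ) :
    ∃ c : ℝ, 1 ≤ c ∧ ∀ t, 1 ≤ t → ∀ l, 1 ≤ l → l ≤ 2 →
      c⁻¹ ≤ φ (l * t) / φ t ∧ φ (l * t) / φ t ≤ c := by
  obtain ⟨hmeas, hpos, a, ha, c, hc, hbd⟩ := hφ
  have hc0 : (0:ℝ) < c := lt_of_lt_of_le one_pos hc
  have key : ∀ k : ℕ, ∀ t, 1 ≤ t → ∀ l, 1 ≤ l → l ≤ a ^ k →
      (c ^ k)⁻¹ ≤ φ (l * t) / φ t ∧ φ (l * t) / φ t ≤ c ^ k := by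
    intro k
    induction k with
    | zero =>
      intro t ht l hl hla
      have : l = 1 := le_antisymm (by simpa using hla) hl
      subst this
      simp [div_self (hpos t ht).ne']
    | succ k ih =>
      intro t ht l hl hla
      by_cases hla' : l ≤ a
      · have h := hbd t ht l hl hla'
        have h1 : (1:ℝ) ≤ c ^ k := one_le_pow₀ hc -- may need rename
        constructor
        · refine le_trans ?_ h.1
          rw [pow_succ]
          refine inv_anti₀ hc0 ?_
          nlinarith [pow_pos hc0 k]
        · refine h.2.trans ?_
          rw [pow_succ]
          nlinarith [pow_pos hc0 k]
      · push_neg at hla'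
        have ha0 : (0:ℝ) < a := lt_trans one_pos ha
        have hl1 : (1:ℝ) ≤ l / a := (one_le_div ha0).2 hla'.le
        have hlk : l / a ≤ a ^ k := by
          rw [div_le_iff₀ ha0]
          calc l ≤ a ^ (k+1) := hla
          _ = a ^ k * a := by ring
        set u := (l / a) * t with hu
        have hu1 : 1 ≤ u := one_le_mul_of_one_le_of_one_le hl1 ht -- maybe wrong name
        have h1 := ih t ht (l/a) hl1 hlk
        have h2 := hbd u hu1 a (le_of_lt ha) le_rfl
        have hau : a * u = l * t := by
          rw [hu]; field_simp
        have hφt : 0 < φ t := hpos t ht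
        have hφu : 0 < φ u := hpos u hu1
        have hrw : φ (l * t) / φ t = (φ (a * u) / φ u) * (φ u / φ t) := by
          rw [hau]; field_simp
        rw [hrw]
        have hck : (0:ℝ) < c ^ k := pow_pos hc0 k
        constructor
        · rw [pow_succ, mul_inv]
          have e1 : 0 < φ (a*u) / φ u := div_pos (by rw [hau]; exact hpos _ (le_trans ht (le_mul_of_one_le_left (le_trans one_pos.le ht) hl))) hφu
          calc (c^k)⁻¹ * c⁻¹ = c⁻¹ * (c^k)⁻¹ := by ring
          _ ≤ (φ (a*u)/φ u) * (φ u / φ t) := by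
              apply mul_le_mul h2.1 h1.1 (by positivity) e1.le
        · rw [pow_succ]
          have e2 : 0 ≤ φ u / φ t := le_of_lt (div_pos hφu hφt)
          calc (φ (a*u)/φ u) * (φ u / φ t) ≤ c * c^k := by
                apply mul_le_mul h2.2 h1.2 e2 hc0.le
          _ = c^k * c := by ring
  obtain ⟨k, hk⟩ := pow_unbounded_of_one_lt (2:ℝ) ha
  refine ⟨c ^ k, one_le_pow₀ hc, fun t ht l hl hla => key k t ht l hl (hla.trans hk.le)⟩

noncomputable def Rtail (g : ℝ → ℝ) (t : ℝ) : ℝ := ∫ s in Ioi (max t 1), g s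

section Rtail

variable {g : ℝ → ℝ} (hg_meas : Measurable g) (hg_pos : ∀ t, 1 ≤ t → 0 < g t)
  (hg_int : IntegrableOn g (Ici 1))

include hg_pos hg_int

omit hg_pos in
lemma g_int_Ioi {t : ℝ} (ht : 1 ≤ t) : IntegrableOn g (Ioi t) :=
  hg_int.mono_set (fun s hs => le_trans ht (le_of_lt hs))

omit hg_pos hg_int in
lemma Rtail_eq {t : ℝ} (ht : 1 ≤ t) : Rtail g t = ∫ s in Ioi t, g s := by
  rw [Rtail, max_eq_left ht]

lemma Rtail_split {u v : ℝ} (hu : 1 ≤ u) (huv : u ≤ v) :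
    Rtail g u = (∫ s in u..v, g s) + Rtail g v := by
  rw [Rtail_eq hu, Rtail_eq (hu.trans huv),
    intervalIntegral.integral_of_le huv, ← setIntegral_union (Ioc_disjoint_Ioi le_rfl)
      measurableSet_Ioi (hg_int.mono_set ?_) (g_int_Ioi hg_int (hu.trans huv)),
    Ioc_union_Ioi_eq_Ioi huv]
  exact fun s hs => le_trans hu (le_of_lt hs.1)

lemma Rtail_anti : Antitone (Rtail g) := by
  intro s t hst
  apply setIntegral_mono_set (g_int_Ioi hg_int (le_max_right s 1))
  · exact (ae_restrict_iff' measurableSet_Ioi).2 (ae_of_all _ fun x hx =>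
      (hg_pos x (le_trans (le_max_right s 1) hx.le)).le)
  · exact HasSubset.Subset.eventuallyLE (Ioi_subset_Ioi (max_le_max hst le_rfl))

lemma Rtail_pos (t : ℝ) : 0 < Rtail g t := by
  have hb : (1:ℝ) ≤ max t 1 := le_max_right t 1
  rw [Rtail]
  rw [setIntegral_pos_iff_support_of_nonneg_ae ((ae_restrict_iff' measurableSet_Ioi).2
    (ae_of_all _ fun x hx => (hg_pos x (hb.trans hx.le)).le)) (g_int_Ioi hg_int hb)]
  refine lt_of_lt_of_le ?_ (measure_mono (fun x hx => ⟨(hg_pos x (hb.trans hx.le)).ne', hx⟩ :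
    Ioi (max t 1) ⊆ Function.support g ∩ Ioi (max t 1)))
  simp [Real.volume_Ioi]

lemma Rtail_tendsto : Tendsto (Rtail g) atTop (𝓝 0) := by
  have h1 : Tendsto (fun t : ℝ => ∫ s in (1:ℝ)..t, g s) atTop
      (𝓝 (∫ s in Ioi (1:ℝ), g s)) :=
    intervalIntegral_tendsto_integral_Ioi 1 (g_int_Ioi hg_int le_rfl) tendsto_id
  have h2 : Tendsto (fun t : ℝ => (∫ s in Ioi (1:ℝ), g s) - ∫ s in (1:ℝ)..t, g s) atTop
      (𝓝 ((∫ s in Ioi (1:ℝ), g s) - ∫ s in Ioi (1:ℝ), g s)) := tendsto_const_nhds.sub h1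
  rw [sub_self] at h2
  apply h2.congr'
  filter_upwards [eventually_ge_atTop (1:ℝ)] with t ht
  have := Rtail_split (g := g) hg_pos hg_int le_rfl ht
  rw [Rtail_eq (le_refl (1:ℝ))] at this
  linarith

lemma Rtail_doubling {K : ℝ} (hK1 : 1 ≤ K) (hK : ∀ t, 1 ≤ t → g t ≤ K * g (2*t)) :
    ∀ t, 1 ≤ t → Rtail g t ≤ (1 + K/2) * Rtail g (2*t) := by
  intro t ht
  have ht2 : (1:ℝ) ≤ 2*t := by linarith
  have ht4 : 2*t ≤ 2*(2*t) := by linarith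
  have htt : t ≤ 2*t := by linarith
  have hii : IntervalIntegrable g volume (2*t) (2*(2*t)) :=
    (intervalIntegrable_iff_integrableOn_Ioc_of_le ht4).2
      ((g_int_Ioi hg_int ht2).mono_set Ioc_subset_Ioi_self)
  have hii' : IntervalIntegrable g volume t (2*t) :=
    (intervalIntegrable_iff_integrableOn_Ioc_of_le htt).2
      ((g_int_Ioi hg_int ht).mono_set Ioc_subset_Ioi_self)
  have hcomp : IntervalIntegrable (fun s => g (2*s)) volume t (2*t) := by
    have h := hii.comp_mul_left (c := 2)
    have e1 : (2*t)/2 = t := by ring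
    have e2 : (2*(2*t))/2 = 2*t := by ring
    rwa [e1, e2] at h
  have step1 : (∫ s in t..2*t, g s) ≤ ∫ s in t..2*t, K * g (2*s) := by
    apply intervalIntegral.integral_mono_on htt hii' (hcomp.const_mul K)
    intro x hx
    exact hK x (le_trans ht hx.1)
  have step2 : (∫ s in t..2*t, K * g (2*s)) = K * (2⁻¹ * ∫ s in 2*t..2*(2*t), g s) := by
    rw [intervalIntegral.integral_const_mul, intervalIntegral.integral_comp_mul_left g
      (two_ne_zero), smul_eq_mul]
  have step4 : (∫ s in 2*t..2*(2*t), g s) ≤ Rtail g (2*t) := by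
    have hsplit := Rtail_split (g := g) hg_pos hg_int ht2 ht4
    have hpos4 := Rtail_pos (g := g) hg_pos hg_int (2*(2*t))
    linarith
  have hsplit2 := Rtail_split (g := g) hg_pos hg_int ht htt
  have hJnn : (0:ℝ) ≤ ∫ s in 2*t..2*(2*t), g s := by
    rw [intervalIntegral.integral_of_le ht4]
    apply setIntegral_nonneg measurableSet_Ioc
    intro x hx; exact (hg_pos x (le_trans ht2 hx.1.le)).le
  nlinarith [Rtail_pos (g := g) hg_pos hg_int (2*t)]

omit hg_pos hg_int in
lemma key_alg {A B K : ℝ} (hB : 0 < B) (hBA : B ≤ A) (hAK : A ≤ K * B) (hK1 : 1 ≤ K) :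
    (A - B) * (Real.sqrt B)⁻¹ ≤ (1 + Real.sqrt K) * (Real.sqrt A - Real.sqrt B) := by
  have hA : 0 < A := hB.trans_le hBA
  have sB := Real.sqrt_pos.2 hB
  have sAB : Real.sqrt B ≤ Real.sqrt A := Real.sqrt_le_sqrt hBA
  have h1 : Real.sqrt A ≤ Real.sqrt K * Real.sqrt B := by
    rw [← Real.sqrt_mul (by linarith) B]; exact Real.sqrt_le_sqrt hAK
  have e1 : Real.sqrt A ^ 2 = A := Real.sq_sqrt hA.le
  have e2 : Real.sqrt B ^ 2 = B := Real.sq_sqrt hB.le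
  rw [mul_comm, ← div_eq_inv_mul, div_le_iff₀ sB]
  have h2 : (Real.sqrt A - Real.sqrt B) * (Real.sqrt A + Real.sqrt B) ≤
      (Real.sqrt A - Real.sqrt B) * (Real.sqrt K * Real.sqrt B + Real.sqrt B) := by
    apply mul_le_mul_of_nonneg_left (by linarith) (by linarith)
  nlinarith

include hg_meas in
lemma final_integrable {K : ℝ} (hK1 : 1 ≤ K)
    (hdbl : ∀ t, 1 ≤ t → Rtail g t ≤ K * Rtail g (2*t)) :
    IntegrableOn (fun t => g t / Real.sqrt (Rtail g t)) (Ici 1) := by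
  set f : ℝ → ℝ := fun t => g t / Real.sqrt (Rtail g t) with hf
  have hR_meas : Measurable (Rtail g) := (Rtail_anti hg_pos hg_int).measurable
  have hf_meas : Measurable f := hg_meas.div hR_meas.sqrt
  have hf_nonneg : ∀ t, 1 ≤ t → 0 ≤ f t := fun t ht =>
    div_nonneg (hg_pos t ht).le (Real.sqrt_nonneg _)
  have hpiece : ∀ u v : ℝ, 1 ≤ u → u ≤ v → IntegrableOn f (Ioc u v) := by
    intro u v hu huv
    have hRv := Rtail_pos (g := g) hg_pos hg_int v
    have hbig : IntegrableOn (fun t => g t * (Real.sqrt (Rtail g v))⁻¹) (Ioc u v) :=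
      ((hg_int.mono_set (fun x hx => le_trans hu hx.1.le)).mul_const _)
    apply Integrable.mono' hbig (hf_meas.aestronglyMeasurable.restrict)
    refine (ae_restrict_iff' measurableSet_Ioc).2 (ae_of_all _ fun t htIoc => ?_)
    have ht1 : (1:ℝ) ≤ t := le_trans hu htIoc.1.le
    rw [Real.norm_of_nonneg (hf_nonneg t ht1)]
    have hRt : Rtail g v ≤ Rtail g t := Rtail_anti hg_pos hg_int htIoc.2
    have hsv : 0 < Real.sqrt (Rtail g v) := Real.sqrt_pos.2 hRv
    have hst : Real.sqrt (Rtail g v) ≤ Real.sqrt (Rtail g t) := Real.sqrt_le_sqrt hRt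
    show g t / Real.sqrt (Rtail g t) ≤ g t * (Real.sqrt (Rtail g v))⁻¹
    rw [div_eq_mul_inv]
    exact mul_le_mul_of_nonneg_left (inv_anti₀ hsv hst) (hg_pos t ht1).le
  have hpiece_bound : ∀ u : ℝ, 1 ≤ u →
      (∫ t in u..2*u, f t) ≤ (1 + Real.sqrt K) *
        (Real.sqrt (Rtail g u) - Real.sqrt (Rtail g (2*u))) := by
    intro u hu
    have hu2 : u ≤ 2*u := by linarith
    have h12u : (1:ℝ) ≤ 2*u := by linarith
    have hRu := Rtail_pos (g := g) hg_pos hg_int u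
    have hR2u := Rtail_pos (g := g) hg_pos hg_int (2*u)
    have hii : IntervalIntegrable f volume u (2*u) :=
      (intervalIntegrable_iff_integrableOn_Ioc_of_le hu2).2 (hpiece u (2*u) hu hu2)
    have hgu : IntervalIntegrable g volume u (2*u) :=
      (intervalIntegrable_iff_integrableOn_Ioc_of_le hu2).2
        ((g_int_Ioi hg_int hu).mono_set Ioc_subset_Ioi_self)
    have step1 : (∫ t in u..2*u, f t) ≤
        ∫ t in u..2*u, g t * (Real.sqrt (Rtail g (2*u)))⁻¹ := by
      apply intervalIntegral.integral_mono_on hu2 hii (hgu.mul_const _)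
      intro x hx
      have hx1 : (1:ℝ) ≤ x := le_trans hu hx.1
      have hRx : Rtail g (2*u) ≤ Rtail g x := Rtail_anti hg_pos hg_int hx.2
      have hs2u : 0 < Real.sqrt (Rtail g (2*u)) := Real.sqrt_pos.2 hR2u
      show g x / Real.sqrt (Rtail g x) ≤ g x * (Real.sqrt (Rtail g (2*u)))⁻¹
      rw [div_eq_mul_inv]
      exact mul_le_mul_of_nonneg_left
        (inv_anti₀ hs2u (Real.sqrt_le_sqrt hRx)) (hg_pos x hx1).le
    have step2 : (∫ t in u..2*u, g t * (Real.sqrt (Rtail g (2*u)))⁻¹) =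
        (Rtail g u - Rtail g (2*u)) * (Real.sqrt (Rtail g (2*u)))⁻¹ := by
      rw [intervalIntegral.integral_mul_const]
      have := Rtail_split (g := g) hg_pos hg_int hu hu2
      have : (∫ t in u..2*u, g t) = Rtail g u - Rtail g (2*u) := by linarith
      rw [this]
    have hRanti : Rtail g (2*u) ≤ Rtail g u := Rtail_anti hg_pos hg_int hu2
    have := key_alg hR2u hRanti (hdbl u hu) hK1
    linarith [step1, step2.le, step2.ge]
  -- sum over dyadic pieces
  have hMbound : ∀ N : ℕ, (∫ t in (1:ℝ)..(2:ℝ)^N, ‖f t‖) ≤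
      (1 + Real.sqrt K) * Real.sqrt (Rtail g 1) := by
    intro N
    have hpow : ∀ k : ℕ, (1:ℝ) ≤ 2^k := fun k => one_le_pow₀ (by norm_num)
    have hpow2 : ∀ k : ℕ, (2:ℝ)^(k+1) = 2 * 2^k := fun k => by ring
    have hnorm : (∫ t in (1:ℝ)..(2:ℝ)^N, ‖f t‖) = ∫ t in (1:ℝ)..(2:ℝ)^N, f t := by
      apply intervalIntegral.integral_congr
      intro x hx
      rw [uIcc_of_le (hpow N)] at hx
      exact Real.norm_of_nonneg (hf_nonneg x hx.1)
    rw [hnorm]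
    have hadj : ∀ k, k < N → IntervalIntegrable f volume ((2:ℝ)^k) ((2:ℝ)^(k+1)) := by
      intro k _
      refine (intervalIntegrable_iff_integrableOn_Ioc_of_le ?_).2
        (hpiece _ _ (hpow k) ?_) <;>
      · rw [hpow2 k]; nlinarith [hpow k]
    have hsum := intervalIntegral.sum_integral_adjacent_intervals
      (a := fun k => (2:ℝ)^k) (μ := volume) (f := f) hadj
    norm_num at hsum
    rw [← hsum]
    have hterm : ∀ k ∈ Finset.range N, (∫ t in ((2:ℝ)^k)..((2:ℝ)^(k+1)), f t) ≤
        (1 + Real.sqrt K) *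
          (Real.sqrt (Rtail g ((2:ℝ)^k)) - Real.sqrt (Rtail g ((2:ℝ)^(k+1)))) := by
      intro k _
      have h := hpiece_bound ((2:ℝ)^k) (hpow k)
      rw [← hpow2 k] at h
      exact h
    calc ∑ k ∈ Finset.range N, ∫ t in ((2:ℝ)^k)..((2:ℝ)^(k+1)), f t
        ≤ ∑ k ∈ Finset.range N, (1 + Real.sqrt K) *
          (Real.sqrt (Rtail g ((2:ℝ)^k)) - Real.sqrt (Rtail g ((2:ℝ)^(k+1)))) :=
        Finset.sum_le_sum hterm
      _ = (1 + Real.sqrt K) * ∑ k ∈ Finset.range N,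
          (Real.sqrt (Rtail g ((2:ℝ)^k)) - Real.sqrt (Rtail g ((2:ℝ)^(k+1)))) := by
        rw [Finset.mul_sum]
      _ = (1 + Real.sqrt K) *
          (Real.sqrt (Rtail g ((2:ℝ)^0)) - Real.sqrt (Rtail g ((2:ℝ)^N))) := by
        rw [Finset.sum_range_sub' (fun k => Real.sqrt (Rtail g ((2:ℝ)^k)))]
      _ ≤ (1 + Real.sqrt K) * Real.sqrt (Rtail g 1) := by
        have h0 : ((2:ℝ)^0 : ℝ) = 1 := by norm_num
        rw [h0]
        have hsk : (0:ℝ) ≤ 1 + Real.sqrt K := by positivity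
        nlinarith [Real.sqrt_nonneg (Rtail g ((2:ℝ)^N)), Real.sqrt_nonneg (Rtail g 1)]
  have hIoi : IntegrableOn f (Ioi 1) := by
    apply integrableOn_Ioi_of_intervalIntegral_norm_bounded
      ((1 + Real.sqrt K) * Real.sqrt (Rtail g 1)) 1
      (fun N : ℕ => hpiece 1 ((2:ℝ)^N) le_rfl (one_le_pow₀ (by norm_num)))
      (tendsto_pow_atTop_atTop_of_one_lt one_lt_two)
    exact Eventually.of_forall hMbound
  rw [integrableOn_Ici_iff_integrableOn_Ioi]
  exact hIoi

end Rtail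


/-- If `φ ∈ OR` satisfies `∫₁^∞ t^{2q+n-1}/φ(t)² dt < ∞` (with integers `q ≥ 0`, `n ≥ 1`),
then `φ = φ₁ · φ₂` on `[1,∞)` for some `φ₁, φ₂ ∈ OR` with `φ₁(t) → ∞` as `t → ∞` and
`∫₁^∞ t^{2q+n-1}/φ₂(t)² dt < ∞`. -/
theorem or_factorization (φ : ℝ → ℝ) (hφ : ORClass φ) (q n : ℕ) (hn : 1 ≤ n)
    (hint : IntegrableOn (fun t : ℝ => t ^ (2 * q + n - 1) / (φ t) ^ 2) (Set.Ici (1 : ℝ))) :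
    ∃ φ₁ φ₂ : ℝ → ℝ, ORClass φ₁ ∧ ORClass φ₂ ∧
      (∀ t : ℝ, 1 ≤ t → φ t = φ₁ t * φ₂ t) ∧
      Tendsto φ₁ atTop atTop ∧
      IntegrableOn (fun t : ℝ => t ^ (2 * q + n - 1) / (φ₂ t) ^ 2) (Set.Ici (1 : ℝ)) := by
  obtain ⟨c2, hc2, hbd2⟩ := orclass_two hφ
  obtain ⟨hφmeas, hφpos, -⟩ := hφ
  set m := 2 * q + n - 1 with hm
  set g : ℝ → ℝ := fun t => t ^ m / φ t ^ 2 with hg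
  have hg_meas : Measurable g := (measurable_id.pow_const m).div (hφmeas.pow_const 2)
  have hg_pos : ∀ t, 1 ≤ t → 0 < g t := fun t ht =>
    div_pos (pow_pos (by linarith) m) (pow_pos (hφpos t ht) 2)
  have hg_int : IntegrableOn g (Ici 1) := hint
  set K := c2 ^ 2 with hK
  have hK1 : (1:ℝ) ≤ K := one_le_pow₀ hc2
  have hc2pos : (0:ℝ) < c2 := lt_of_lt_of_le one_pos hc2
  have hgK : ∀ t, 1 ≤ t → g t ≤ K * g (2*t) := by
    intro t ht
    have h2t : (1:ℝ) ≤ 2*t := by linarith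
    have hr := (hbd2 t ht 2 one_le_two le_rfl).2
    have hφt := hφpos t ht
    have hφ2t := hφpos (2*t) h2t
    have h1 : φ (2*t) ≤ c2 * φ t := (div_le_iff₀ hφt).1 hr
    have hnum : t ^ m ≤ (2*t) ^ m := pow_le_pow_left₀ (by linarith) (by linarith) m
    have hden : φ (2*t)^2 ≤ K * φ t ^2 := by rw [hK]; nlinarith
    have htm : (0:ℝ) ≤ t ^ m := pow_nonneg (by linarith) m
    show t ^ m / φ t ^ 2 ≤ K * ((2*t) ^ m / φ (2*t) ^ 2)
    rw [mul_div_assoc', div_le_div_iff₀ (pow_pos hφt 2) (pow_pos hφ2t 2)]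
    calc t ^ m * φ (2*t)^2 ≤ (2*t) ^ m * (K * φ t ^2) :=
          mul_le_mul hnum hden (by positivity) (pow_nonneg (by linarith) m)
      _ = K * (2*t) ^ m * φ t ^ 2 := by ring
  set K' := 1 + K/2 with hK'
  have hK'1 : (1:ℝ) ≤ K' := by rw [hK']; linarith
  have hdbl : ∀ t, 1 ≤ t → Rtail g t ≤ K' * Rtail g (2*t) :=
    Rtail_doubling hg_pos hg_int hK1 hgK
  set R := Rtail g with hR
  have hRpos : ∀ t, 0 < R t := Rtail_pos hg_pos hg_int
  have hRanti : Antitone R := Rtail_anti hg_pos hg_int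
  have hRmeas : Measurable R := hRanti.measurable
  set s : ℝ → ℝ := fun t => Real.sqrt (Real.sqrt (R t)) with hs
  have hs_meas : Measurable s := hRmeas.sqrt.sqrt
  have hs_pos : ∀ t, 0 < s t := fun t => Real.sqrt_pos.2 (Real.sqrt_pos.2 (hRpos t))
  set cK := Real.sqrt (Real.sqrt K') with hcK
  have hcK1 : (1:ℝ) ≤ cK := by
    rw [hcK]
    calc (1:ℝ) = Real.sqrt (Real.sqrt 1) := by rw [Real.sqrt_one, Real.sqrt_one]
    _ ≤ Real.sqrt (Real.sqrt K') := Real.sqrt_le_sqrt (Real.sqrt_le_sqrt hK'1)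
  -- key ratio bounds for s on [1,2]
  have hs_ratio : ∀ t, 1 ≤ t → ∀ l, 1 ≤ l → l ≤ 2 →
      s (l*t) ≤ s t ∧ s t ≤ cK * s (l*t) := by
    intro t ht l hl hl2
    have ht0 : (0:ℝ) < t := by linarith
    have hlt : t ≤ l*t := le_mul_of_one_le_left ht0.le hl
    have hlt2 : l*t ≤ 2*t := mul_le_mul_of_nonneg_right hl2 ht0.le
    constructor
    · exact Real.sqrt_le_sqrt (Real.sqrt_le_sqrt (hRanti hlt))
    · have h1 : R t ≤ K' * R (l*t) :=
        (hdbl t ht).trans (mul_le_mul_of_nonneg_left (hRanti hlt2) (by linarith))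
      have h2 : Real.sqrt (R t) ≤ Real.sqrt K' * Real.sqrt (R (l*t)) := by
        rw [← Real.sqrt_mul (by linarith : (0:ℝ) ≤ K')]
        exact Real.sqrt_le_sqrt h1
      calc s t ≤ Real.sqrt (Real.sqrt K' * Real.sqrt (R (l*t))) := Real.sqrt_le_sqrt h2
      _ = cK * s (l*t) := by
          rw [Real.sqrt_mul (Real.sqrt_nonneg _)]
  refine ⟨fun t => (s t)⁻¹, fun t => φ t * s t, ?_, ?_, ?_, ?_, ?_⟩
  · -- ORClass φ₁
    refine ⟨hs_meas.inv, fun t _ => inv_pos.2 (hs_pos t), 2, one_lt_two, cK, hcK1, ?_⟩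
    intro t ht l hl hl2
    obtain ⟨hu, hlo⟩ := hs_ratio t ht l hl hl2
    have hratio : (s (l*t))⁻¹ / (s t)⁻¹ = s t / s (l*t) := by
      rw [div_eq_mul_inv, inv_inv, div_eq_mul_inv, mul_comm]
    rw [hratio]
    constructor
    · calc cK⁻¹ ≤ 1 := inv_le_one_of_one_le₀ hcK1
      _ ≤ s t / s (l*t) := (one_le_div (hs_pos _)).2 hu
    · rw [div_le_iff₀ (hs_pos _)]; exact hlo
  · -- ORClass φ₂
    refine ⟨hφmeas.mul hs_meas, fun t ht => mul_pos (hφpos t ht) (hs_pos t),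
      2, one_lt_two, c2 * cK, one_le_mul_of_one_le_of_one_le hc2 hcK1, ?_⟩
    intro t ht l hl hl2
    obtain ⟨hu, hlo⟩ := hs_ratio t ht l hl hl2
    obtain ⟨hflo, hfup⟩ := hbd2 t ht l hl hl2
    have hφt := hφpos t ht
    have hφlt := hφpos (l*t) (le_trans ht (le_mul_of_one_le_left (by linarith) hl))
    have hratio : φ (l*t) * s (l*t) / (φ t * s t) = (φ (l*t) / φ t) * (s (l*t) / s t) :=
      mul_div_mul_comm _ _ _ _
    rw [hratio]
    constructor
    · rw [mul_inv]
      have hcKpos : (0:ℝ) < cK := lt_of_lt_of_le one_pos hcK1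
      have h2 : (cK)⁻¹ ≤ s (l*t) / s t := by
        rw [le_div_iff₀ (hs_pos t)]
        calc cK⁻¹ * s t ≤ cK⁻¹ * (cK * s (l*t)) :=
              mul_le_mul_of_nonneg_left hlo (inv_pos.2 hcKpos).le
        _ = s (l*t) := by rw [← mul_assoc, inv_mul_cancel₀ hcKpos.ne', one_mul]
      exact mul_le_mul hflo h2 (by positivity) (le_of_lt (div_pos hφlt hφt))
    · have h2 : s (l*t) / s t ≤ 1 := (div_le_one (hs_pos t)).2 hu
      calc (φ (l*t) / φ t) * (s (l*t) / s t) ≤ c2 * 1 :=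
            mul_le_mul hfup h2 (by positivity) (by linarith)
      _ ≤ c2 * cK := by nlinarith
  · -- product identity
    intro t ht
    rw [mul_comm ((s t)⁻¹), mul_assoc, mul_inv_cancel₀ (hs_pos t).ne', mul_one]
  · -- tendsto
    have h1 : Tendsto R atTop (𝓝 0) := Rtail_tendsto hg_pos hg_int
    have hc : Continuous fun x : ℝ => Real.sqrt (Real.sqrt x) :=
      Real.continuous_sqrt.comp Real.continuous_sqrt
    have h2 : Tendsto s atTop (𝓝 0) := by
      have := (hc.tendsto 0).comp h1
      simp only [Real.sqrt_zero] at this; exact this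
    have h3 : Tendsto s atTop (𝓝[>] 0) :=
      tendsto_nhdsWithin_of_tendsto_nhds_of_eventually_within _ h2
        (Eventually.of_forall fun t => hs_pos t)
    exact tendsto_inv_nhdsGT_zero.comp h3
  · -- integrability
    have hfin := final_integrable hg_meas hg_pos hg_int hK'1 hdbl
    apply hfin.congr_fun _ measurableSet_Ici
    intro t ht
    simp only [mem_Ici] at ht
    have hst2 : (s t) ^ 2 = Real.sqrt (R t) := Real.sq_sqrt (Real.sqrt_nonneg _)
    show g t / Real.sqrt (R t) = t ^ m / (φ t * s t) ^ 2
    rw [mul_pow, hst2, hg, div_div]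
end

section
/- Let (X, μ) be a measure space, κ > 0, and let g : X → ℝ be measurable with g(x) ≥ κ for μ-almost every x. Let ψ : (0,∞) → (0,∞) be Borel measurable and let c > 0 satisfy ψ(t)/ψ(τ) ≤ c·max{1, t/τ} for all t, τ ≥ κ. Let u ∈ L²(μ;ℂ) be such that g·u ∈ L²(μ;ℂ). Then for every τ ≥ κ the function (ψ∘g)·u belongs to L²(μ;ℂ) and ‖(ψ∘g)·u‖₂ ≤ c·ψ(τ)·(‖u‖₂² + τ⁻²·‖g·u‖₂²)^{1/2}. -/
open MeasureTheory Filter Set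

lemma toReal_eLpNorm_two_aux {X : Type*} [MeasurableSpace X] {μ : Measure X}
    {E : Type*} [NormedAddCommGroup E] {f : X → E} (hf : MemLp f 2 μ) :
    (eLpNorm f 2 μ).toReal = Real.sqrt (∫ x, ‖f x‖ ^ 2 ∂μ) := by
  rw [hf.eLpNorm_eq_integral_rpow_norm two_ne_zero ENNReal.ofNat_ne_top,
    ENNReal.toReal_ofReal (by positivity)]
  have h2 : (2 : ENNReal).toReal = 2 := by norm_num
  rw [h2]
  have : (∫ x, ‖f x‖ ^ (2 : ℝ) ∂μ) = ∫ x, ‖f x‖ ^ 2 ∂μ := by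
    congr 1; funext x
    rw [show ((2:ℝ) = ((2:ℕ):ℝ)) by norm_num, Real.rpow_natCast]
  rw [this, Real.sqrt_eq_rpow]
  norm_num

/-- Interpolational inequality (Theorem 3.1) realized for the multiplication operator by `g`
on `L²(μ)`: if `g ≥ κ > 0` a.e., `ψ : (0,∞) → (0,∞)` is Borel measurable, `c > 0` satisfies
`ψ(t)/ψ(τ) ≤ c·max{1, t/τ}` for all `t, τ ≥ κ`, and `u, g·u ∈ L²(μ;ℂ)`, then for every
`τ ≥ κ` one has `(ψ∘g)·u ∈ L²` and
`‖(ψ∘g)·u‖₂ ≤ c·ψ(τ)·(‖u‖₂² + τ⁻²·‖g·u‖₂²)^{1/2}`. -/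
theorem interpolational_inequality {X : Type*} [MeasurableSpace X] (μ : Measure X)
    (κ : ℝ) (hκ : 0 < κ) (g : X → ℝ) (hgm : Measurable g) (hgκ : ∀ᵐ x ∂μ, κ ≤ g x)
    (ψ : ℝ → ℝ) (hψm : Measurable ψ) (hψpos : ∀ t : ℝ, 0 < t → 0 < ψ t)
    (c : ℝ) (hc : 0 < c)
    (hineq : ∀ t : ℝ, κ ≤ t → ∀ τ : ℝ, κ ≤ τ → ψ t / ψ τ ≤ c * max 1 (t / τ))
    (u : X → ℂ) (hu : MemLp u 2 μ) (hgu : MemLp (fun x => g x • u x) 2 μ) :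
    ∀ τ : ℝ, κ ≤ τ →
      MemLp (fun x => ψ (g x) • u x) 2 μ ∧
      (eLpNorm (fun x => ψ (g x) • u x) 2 μ).toReal ≤
        c * ψ τ * Real.sqrt ((eLpNorm u 2 μ).toReal ^ 2 +
          (1 / τ ^ 2) * (eLpNorm (fun x => g x • u x) 2 μ).toReal ^ 2) := by
  intro τ hτ
  have hτ0 : 0 < τ := lt_of_lt_of_le hκ hτ
  have hψτ : 0 < ψ τ := hψpos τ hτ0
  -- the comparison function
  set A : X → ℝ := fun x => ‖u x‖ ^ 2 + (1 / τ ^ 2) * ‖g x • u x‖ ^ 2 with hA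
  set h : X → ℝ := fun x => Real.sqrt (A x) with hh
  have hA_nonneg : ∀ x, 0 ≤ A x := fun x => by positivity
  -- measurability
  have hum : AEStronglyMeasurable u μ := hu.1
  have hgum : AEStronglyMeasurable (fun x => g x • u x) μ := hgu.1
  have hAm : AEMeasurable A μ := by
    exact ((hum.norm.aemeasurable.pow_const 2).add
      ((hgum.norm.aemeasurable.pow_const 2).const_mul _))
  have hhm : AEStronglyMeasurable h μ :=
    Real.continuous_sqrt.comp_aestronglyMeasurable hAm.aestronglyMeasurable
  -- integrability of squares
  have hu2 : Integrable (fun x => ‖u x‖ ^ 2) μ :=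
    (memLp_two_iff_integrable_sq hum.norm).1 hu.norm
  have hgu2 : Integrable (fun x => ‖g x • u x‖ ^ 2) μ :=
    (memLp_two_iff_integrable_sq hgum.norm).1 hgu.norm
  have hAint : Integrable A μ := hu2.add (hgu2.const_mul _)
  -- h ∈ L²
  have hhsq : (fun x => h x ^ 2) = A := funext fun x => Real.sq_sqrt (hA_nonneg x)
  have hhL2 : MemLp h 2 μ := by
    rw [memLp_two_iff_integrable_sq hhm, hhsq]; exact hAint
  -- pointwise bound
  have hbound : ∀ᵐ x ∂μ, ‖ψ (g x) • u x‖ ≤ (c * ψ τ) * ‖h x‖ := by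
    filter_upwards [hgκ] with x hx
    have hgx : 0 < g x := lt_of_lt_of_le hκ hx
    have hψg : 0 < ψ (g x) := hψpos _ hgx
    have h1 : ψ (g x) ≤ c * max 1 (g x / τ) * ψ τ :=
      (div_le_iff₀ hψτ).1 (hineq (g x) hx τ hτ)
    have hmaxnn : 0 ≤ max 1 (g x / τ) := le_trans zero_le_one (le_max_left _ _)
    have hAx : A x = ‖u x‖ ^ 2 * (1 + (g x / τ) ^ 2) := by
      simp only [hA, norm_smul, Real.norm_eq_abs, abs_of_pos hgx]
      field_simp
    have hm2 : (max 1 (g x / τ)) ^ 2 ≤ 1 + (g x / τ) ^ 2 := by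
      rcases max_cases 1 (g x / τ) with ⟨he, hle⟩ | ⟨he, hle⟩ <;> rw [he] <;>
        nlinarith [sq_nonneg (g x / τ)]
    have hsq : (max 1 (g x / τ) * ‖u x‖) ^ 2 ≤ A x := by
      rw [hAx, mul_pow]
      nlinarith [sq_nonneg (‖u x‖), norm_nonneg (u x)]
    have hle2 : max 1 (g x / τ) * ‖u x‖ ≤ h x :=
      (Real.le_sqrt (mul_nonneg hmaxnn (norm_nonneg _)) (hA_nonneg x)).2 hsq
    have hhx : ‖h x‖ = h x := Real.norm_of_nonneg (Real.sqrt_nonneg _)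
    rw [norm_smul, Real.norm_eq_abs, abs_of_pos hψg, hhx]
    calc ψ (g x) * ‖u x‖ ≤ (c * max 1 (g x / τ) * ψ τ) * ‖u x‖ := by
          exact mul_le_mul_of_nonneg_right h1 (norm_nonneg _)
      _ = (c * ψ τ) * (max 1 (g x / τ) * ‖u x‖) := by ring
      _ ≤ (c * ψ τ) * h x := by
          exact mul_le_mul_of_nonneg_left hle2 (by positivity)
  -- the function is in L²
  have hfm : AEStronglyMeasurable (fun x => ψ (g x) • u x) μ :=
    ((hψm.comp hgm).aemeasurable.aestronglyMeasurable).smul hum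
  have hfL2 : MemLp (fun x => ψ (g x) • u x) 2 μ := hhL2.of_le_mul hfm hbound
  refine ⟨hfL2, ?_⟩
  -- norm inequality
  have hnorm : eLpNorm (fun x => ψ (g x) • u x) 2 μ ≤
      ENNReal.ofReal (c * ψ τ) * eLpNorm h 2 μ :=
    eLpNorm_le_mul_eLpNorm_of_ae_le_mul hbound 2
  have hfin : ENNReal.ofReal (c * ψ τ) * eLpNorm h 2 μ ≠ ⊤ :=
    (ENNReal.mul_lt_top ENNReal.ofReal_lt_top hhL2.eLpNorm_lt_top).ne
  have htoReal := ENNReal.toReal_mono hfin hnorm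
  rw [ENNReal.toReal_mul, ENNReal.toReal_ofReal (by positivity)] at htoReal
  refine htoReal.trans ?_
  -- compute the norm of h
  have hhval : (eLpNorm h 2 μ).toReal = Real.sqrt (∫ x, A x ∂μ) := by
    rw [toReal_eLpNorm_two_aux hhL2]
    congr 1
    refine integral_congr_ae (Eventually.of_forall fun x => ?_)
    show ‖Real.sqrt (A x)‖ ^ 2 = A x
    rw [Real.norm_of_nonneg (Real.sqrt_nonneg _), Real.sq_sqrt (hA_nonneg x)]
  have hiA : ∫ x, A x ∂μ = (∫ x, ‖u x‖ ^ 2 ∂μ) + (1 / τ ^ 2) * ∫ x, ‖g x • u x‖ ^ 2 ∂μ := by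
    rw [hA, integral_add hu2 (hgu2.const_mul _), integral_const_mul]
  have hueq : (eLpNorm u 2 μ).toReal ^ 2 = ∫ x, ‖u x‖ ^ 2 ∂μ := by
    rw [toReal_eLpNorm_two_aux hu, Real.sq_sqrt (integral_nonneg fun x => by positivity)]
  have hgueq : (eLpNorm (fun x => g x • u x) 2 μ).toReal ^ 2 = ∫ x, ‖g x • u x‖ ^ 2 ∂μ := by
    rw [toReal_eLpNorm_two_aux hgu, Real.sq_sqrt (integral_nonneg fun x => by positivity)]
  rw [hhval, hiA, hueq, hgueq]
end

section
/- Let (X, μ) be a measure space, κ > 0, and let g : X → ℝ be measurable with g(x) ≥ κ for μ-almost every x. Let ψ : (0,∞) → (0,∞) be Borel measurable and let c > 0 satisfy ψ(t)/ψ(τ) ≤ c·max{1, t/τ} for all t, τ ≥ κ. Let u ∈ L²(μ;ℂ) be nonzero and such that g·u ∈ L²(μ;ℂ). Then (ψ∘g)·u ∈ L²(μ;ℂ) and ‖(ψ∘g)·u‖₂ ≤ c·√2·‖u‖₂·ψ(‖g·u‖₂/‖u‖₂). -/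
open MeasureTheory Filter Set ENNReal

/-- Interpolational inequality (3.9) realized for the multiplication operator by `g`
on `L²(μ)`: if `g ≥ κ > 0` a.e., `ψ : (0,∞) → (0,∞)` is Borel measurable, `c > 0` satisfies
`ψ(t)/ψ(τ) ≤ c·max{1, t/τ}` for all `t, τ ≥ κ`, and `u ≠ 0`, `u, g·u ∈ L²(μ;ℂ)`, then
`(ψ∘g)·u ∈ L²` and `‖(ψ∘g)·u‖₂ ≤ c·√2·‖u‖₂·ψ(‖g·u‖₂/‖u‖₂)`. -/
theorem interpolational_inequality_optimized {X : Type*} [MeasurableSpace X] (μ : Measure X)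
    (κ : ℝ) (hκ : 0 < κ) (g : X → ℝ) (hgm : Measurable g) (hgκ : ∀ᵐ x ∂μ, κ ≤ g x)
    (ψ : ℝ → ℝ) (hψm : Measurable ψ) (hψpos : ∀ t : ℝ, 0 < t → 0 < ψ t)
    (c : ℝ) (hc : 0 < c)
    (hineq : ∀ t : ℝ, κ ≤ t → ∀ τ : ℝ, κ ≤ τ → ψ t / ψ τ ≤ c * max 1 (t / τ))
    (u : X → ℂ) (hu : MemLp u 2 μ) (hune : eLpNorm u 2 μ ≠ 0)
    (hgu : MemLp (fun x => g x • u x) 2 μ) :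
    MemLp (fun x => ψ (g x) • u x) 2 μ ∧
      (eLpNorm (fun x => ψ (g x) • u x) 2 μ).toReal ≤
        c * Real.sqrt 2 * (eLpNorm u 2 μ).toReal *
          ψ ((eLpNorm (fun x => g x • u x) 2 μ).toReal / (eLpNorm u 2 μ).toReal) := by
  set N := eLpNorm u 2 μ with hNdef
  set M := eLpNorm (fun x => g x • u x) 2 μ with hMdef
  have hNtop : N ≠ ⊤ := hu.2.ne
  have hMtop : M ≠ ⊤ := hgu.2.ne
  have hNpos : 0 < N.toReal := ENNReal.toReal_pos hune hNtop
  -- κ‖u‖ ≤ ‖gu‖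
  have hsm : eLpNorm (fun x => (κ : ℝ) • u x) 2 μ ≤ M := by
    apply eLpNorm_mono_ae
    filter_upwards [hgκ] with x hx
    simp only [norm_smul, Real.norm_eq_abs]
    refine mul_le_mul_of_nonneg_right ?_ (norm_nonneg _)
    rw [abs_of_pos hκ, abs_of_pos (hκ.trans_le hx)]; exact hx
  have hconst : eLpNorm (fun x => (κ : ℝ) • u x) 2 μ = ENNReal.ofReal κ * N := by
    rw [show (fun x => (κ : ℝ) • u x) = (κ : ℝ) • u from rfl, eLpNorm_const_smul,
      Real.enorm_eq_ofReal hκ.le]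
  have hκNM : κ * N.toReal ≤ M.toReal := by
    have h := ENNReal.toReal_mono hMtop (hconst ▸ hsm)
    rwa [ENNReal.toReal_mul, ENNReal.toReal_ofReal hκ.le] at h
  set τ := M.toReal / N.toReal with hτdef
  have hτκ : κ ≤ τ := (le_div_iff₀ hNpos).mpr hκNM
  have hτpos : 0 < τ := hκ.trans_le hτκ
  have hψτ : 0 < ψ τ := hψpos τ hτpos
  set K := c * ψ τ with hKdef
  have hKpos : 0 < K := mul_pos hc hψτ
  have hMN : M = ENNReal.ofReal τ * N := by
    conv_lhs => rw [← ENNReal.ofReal_toReal hMtop]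
    conv_rhs => rw [← ENNReal.ofReal_toReal hNtop]
    rw [← ENNReal.ofReal_mul (by positivity), hτdef, div_mul_cancel₀ _ hNpos.ne']
  -- formula for eLpNorm at p = 2 with natural powers
  have hform : ∀ (f : X → ℂ),
      eLpNorm f 2 μ = (∫⁻ x, (‖f x‖₊ : ℝ≥0∞) ^ (2 : ℕ) ∂μ) ^ (1 / 2 : ℝ) := by
    intro f
    rw [eLpNorm_eq_lintegral_rpow_enorm_toReal (by norm_num) (by norm_num)]
    norm_num
    rfl
  have hJ : ∀ (f : X → ℂ),
      (∫⁻ x, (‖f x‖₊ : ℝ≥0∞) ^ (2 : ℕ) ∂μ) = (eLpNorm f 2 μ) ^ (2 : ℕ) := by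
    intro f
    rw [hform, ← ENNReal.rpow_natCast _ 2, ← ENNReal.rpow_mul]
    norm_num
  have e1 : ∀ (z : ℂ), (‖z‖₊ : ℝ≥0∞) ^ (2 : ℕ) = ENNReal.ofReal (‖z‖ ^ 2) := by
    intro z
    rw [← enorm_eq_nnnorm, ← ofReal_norm_eq_enorm, ← ENNReal.ofReal_pow (norm_nonneg z)]
  -- pointwise inequality
  have hptwise : ∀ᵐ x ∂μ,
      ‖ψ (g x) • u x‖ ^ 2 ≤ K ^ 2 * ‖u x‖ ^ 2 + (K / τ) ^ 2 * ‖g x • u x‖ ^ 2 := by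
    filter_upwards [hgκ] with x hx
    have hg0 : 0 < g x := hκ.trans_le hx
    have h1 : ψ (g x) ≤ K * max 1 (g x / τ) := by
      have h := hineq (g x) hx τ hτκ
      rw [div_le_iff₀ hψτ] at h
      calc ψ (g x) ≤ c * max 1 (g x / τ) * ψ τ := h
        _ = K * max 1 (g x / τ) := by rw [hKdef]; ring
    have hmax : (max 1 (g x / τ)) ^ 2 ≤ 1 + (g x / τ) ^ 2 := by
      rcases max_cases 1 (g x / τ) with ⟨h, _⟩ | ⟨h, _⟩ <;> rw [h] <;>
        nlinarith [sq_nonneg (g x / τ)]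
    have h2 : ψ (g x) ^ 2 ≤ K ^ 2 * (1 + (g x / τ) ^ 2) := by
      have h3 := pow_le_pow_left₀ (hψpos _ hg0).le h1 2
      rw [mul_pow] at h3
      exact h3.trans (mul_le_mul_of_nonneg_left hmax (by positivity))
    have hn : ‖ψ (g x) • u x‖ ^ 2 = ψ (g x) ^ 2 * ‖u x‖ ^ 2 := by
      rw [norm_smul, mul_pow, Real.norm_eq_abs, sq_abs]
    have hgn : ‖g x • u x‖ ^ 2 = (g x) ^ 2 * ‖u x‖ ^ 2 := by
      rw [norm_smul, mul_pow, Real.norm_eq_abs, sq_abs]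
    rw [hn, hgn]
    have key : K ^ 2 * (1 + (g x / τ) ^ 2) * ‖u x‖ ^ 2
        = K ^ 2 * ‖u x‖ ^ 2 + (K / τ) ^ 2 * ((g x) ^ 2 * ‖u x‖ ^ 2) := by
      field_simp
    calc ψ (g x) ^ 2 * ‖u x‖ ^ 2 ≤ K ^ 2 * (1 + (g x / τ) ^ 2) * ‖u x‖ ^ 2 :=
          mul_le_mul_of_nonneg_right h2 (sq_nonneg _)
      _ = _ := key
  -- integral bound
  have hI : (∫⁻ x, (‖ψ (g x) • u x‖₊ : ℝ≥0∞) ^ (2 : ℕ) ∂μ)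
      ≤ ENNReal.ofReal (2 * K ^ 2) * N ^ (2 : ℕ) := by
    rw [hJ]
    have step : (∫⁻ x, (‖ψ (g x) • u x‖₊ : ℝ≥0∞) ^ (2 : ℕ) ∂μ)
        ≤ ∫⁻ x, (ENNReal.ofReal (K ^ 2) * (‖u x‖₊ : ℝ≥0∞) ^ (2 : ℕ)
            + ENNReal.ofReal ((K / τ) ^ 2) * (‖g x • u x‖₊ : ℝ≥0∞) ^ (2 : ℕ)) ∂μ := by
      refine lintegral_mono_ae ?_
      filter_upwards [hptwise] with x hx
      calc (‖ψ (g x) • u x‖₊ : ℝ≥0∞) ^ (2 : ℕ)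
          = ENNReal.ofReal (‖ψ (g x) • u x‖ ^ 2) := e1 _
        _ ≤ ENNReal.ofReal (K ^ 2 * ‖u x‖ ^ 2 + (K / τ) ^ 2 * ‖g x • u x‖ ^ 2) :=
            ENNReal.ofReal_le_ofReal hx
        _ = _ := by
            rw [ENNReal.ofReal_add (by positivity) (by positivity),
              ENNReal.ofReal_mul (by positivity), ENNReal.ofReal_mul (by positivity),
              e1 (u x), e1 (g x • u x)]
    rw [lintegral_add_left'
        (f := fun x => ENNReal.ofReal (K ^ 2) * (‖u x‖₊ : ℝ≥0∞) ^ (2 : ℕ))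
        ((hu.1.enorm.pow_const 2).const_mul _),
      lintegral_const_mul' _ _ ENNReal.ofReal_ne_top,
      lintegral_const_mul' _ _ ENNReal.ofReal_ne_top, hJ, hJ, hJ, ← hNdef, ← hMdef, hMN] at step
    have hKt : (K / τ) ^ 2 * τ ^ 2 = K ^ 2 := by
      field_simp
    have hr : ENNReal.ofReal ((K / τ) ^ 2) * (ENNReal.ofReal τ * N) ^ 2
        = ENNReal.ofReal (K ^ 2) * N ^ 2 := by
      rw [mul_pow (ENNReal.ofReal τ) N, ← ENNReal.ofReal_pow hτpos.le, ← mul_assoc,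
        ← ENNReal.ofReal_mul (by positivity), hKt]
    rw [hr] at step
    calc eLpNorm (fun x => ψ (g x) • u x) 2 μ ^ (2 : ℕ)
        ≤ ENNReal.ofReal (K ^ 2) * N ^ 2 + ENNReal.ofReal (K ^ 2) * N ^ 2 := step
      _ = ENNReal.ofReal (2 * K ^ 2) * N ^ (2 : ℕ) := by
          rw [← two_mul, ← mul_assoc, ← ENNReal.ofReal_ofNat,
            ← ENNReal.ofReal_mul (by norm_num)]
  have hmeas : AEStronglyMeasurable (fun x => ψ (g x) • u x) μ :=
    ((hψm.comp hgm).aestronglyMeasurable).smul hu.1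
  have hfin : eLpNorm (fun x => ψ (g x) • u x) 2 μ ≤ ENNReal.ofReal (Real.sqrt 2 * K) * N := by
    rw [hform]
    calc (∫⁻ x, (‖ψ (g x) • u x‖₊ : ℝ≥0∞) ^ (2 : ℕ) ∂μ) ^ (1 / 2 : ℝ)
        ≤ (ENNReal.ofReal (2 * K ^ 2) * N ^ (2 : ℕ)) ^ (1 / 2 : ℝ) :=
          ENNReal.rpow_le_rpow hI (by norm_num)
      _ = ENNReal.ofReal (2 * K ^ 2) ^ (1 / 2 : ℝ) * (N ^ (2 : ℕ)) ^ (1 / 2 : ℝ) :=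
          ENNReal.mul_rpow_of_nonneg _ _ (by norm_num)
      _ = ENNReal.ofReal (Real.sqrt 2 * K) * N := by
          congr 1
          · rw [ENNReal.ofReal_rpow_of_nonneg (by positivity) (by norm_num)]
            congr 1
            rw [← Real.sqrt_eq_rpow, Real.sqrt_mul (by norm_num), Real.sqrt_sq hKpos.le]
          · rw [← ENNReal.rpow_natCast _ 2, ← ENNReal.rpow_mul]
            norm_num
  have hlt : eLpNorm (fun x => ψ (g x) • u x) 2 μ < ⊤ :=
    lt_of_le_of_lt hfin (ENNReal.mul_lt_top ENNReal.ofReal_lt_top hNtop.lt_top)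
  refine ⟨⟨hmeas, hlt⟩, ?_⟩
  have htr := ENNReal.toReal_mono (by finiteness) hfin
  rw [ENNReal.toReal_mul, ENNReal.toReal_ofReal (by positivity)] at htr
  calc (eLpNorm (fun x => ψ (g x) • u x) 2 μ).toReal ≤ Real.sqrt 2 * K * N.toReal := htr
    _ = c * Real.sqrt 2 * N.toReal * ψ τ := by rw [hKdef]; ring
end

section
/- Let (X, μ) be a measure space, κ > 0, and let g : X → ℝ be measurable with g(x) ≥ κ for μ-almost every x. Let ψ : (0,∞) → (0,∞) be Borel measurable and suppose that the function χ(τ) := ψ(√τ)² is concave on [κ²,∞). Let u ∈ L²(μ;ℂ) be nonzero and such that g·u ∈ L²(μ;ℂ). Then (ψ∘g)·u ∈ L²(μ;ℂ) and ‖(ψ∘g)·u‖₂ ≤ ‖u‖₂·ψ(‖g·u‖₂/‖u‖₂). -/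
open MeasureTheory Filter Set ENNReal


lemma supp_line {a m : ℝ} {f : ℝ → ℝ} (hf : ConcaveOn ℝ (Ici a) f) (hm : a < m) :
    ∃ c : ℝ, ∀ t ∈ Ici a, f t ≤ f m + c * (t - m) := by
  set t₀ : ℝ := (a + m) / 2 with ht₀
  have ht₀a : t₀ ∈ Ici a := by simp only [mem_Ici, ht₀]; linarith
  have ht₀m : t₀ < m := by simp only [ht₀]; linarith
  set S : Set ℝ := (fun t' => slope f m t') '' Ioi m with hS
  have hSne : S.Nonempty := ⟨slope f m (m + 1), ⟨m + 1, by simp, rfl⟩⟩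
  have hSbdd : BddAbove S := by
    refine ⟨slope f t₀ m, ?_⟩
    rintro s ⟨t', ht', rfl⟩
    simp only [slope_def_field]
    exact hf.slope_anti_adjacent ht₀a (le_of_lt (hm.trans ht'.out)) ht₀m ht'.out
  refine ⟨sSup S, fun t ht => ?_⟩
  rcases lt_trichotomy t m with h | h | h
  · have hc : sSup S ≤ (f m - f t) / (m - t) := by
      apply csSup_le hSne
      rintro s ⟨t', ht', rfl⟩
      simp only [slope_def_field]
      exact hf.slope_anti_adjacent ht (le_of_lt (hm.trans ht'.out)) h ht'.out
    have h1 : 0 < m - t := by linarith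
    rw [le_div_iff₀ h1] at hc
    nlinarith [hc]
  · simp [h]
  · have hc : slope f m t ≤ sSup S := le_csSup hSbdd ⟨t, h, rfl⟩
    rw [slope_def_field] at hc
    have h1 : 0 < t - m := by linarith
    rw [div_le_iff₀ h1] at hc
    linarith

lemma lin_bound {a : ℝ} (ha : 0 < a) {f : ℝ → ℝ} (hf : ConcaveOn ℝ (Ici a) f)
    (hf0 : ∀ t ∈ Ici a, 0 ≤ f t) :
    ∃ M : ℝ, 0 ≤ M ∧ ∀ t ∈ Ici a, f t ≤ M * (1 + t) := by
  set b : ℝ := a + 1 with hb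
  have hbS : b ∈ Ici a := by simp [hb]
  refine ⟨2 * f b, by linarith [hf0 b hbS], fun t ht => ?_⟩
  have hta' : a ≤ t := ht.out
  have h1t : 1 ≤ 1 + t := by linarith
  rcases le_or_gt t b with h | h
  · have h2 : (2*b - t) ∈ Ici a := by simp only [mem_Ici, hb] at ht ⊢; linarith
    have hcc := hf.2 ht h2 (by norm_num : (0:ℝ) ≤ 1/2) (by norm_num : (0:ℝ) ≤ 1/2) (by norm_num)
    simp only [smul_eq_mul] at hcc
    have hmid : (1/2 : ℝ) * t + (1/2 : ℝ) * (2*b - t) = b := by ring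
    rw [hmid] at hcc
    nlinarith [hf0 (2*b - t) h2, hf0 b hbS]
  · have hta : (0:ℝ) < t - a := by linarith [hbS.out]
    have htb : (0:ℝ) ≤ t - b := by linarith
    have h4 := hf.2 self_mem_Ici (le_of_lt (lt_of_le_of_lt hbS.out h) : t ∈ Ici a)
      (div_nonneg htb hta.le) (div_nonneg (by linarith : (0:ℝ) ≤ b - a) hta.le)
      (by field_simp; ring)
    simp only [smul_eq_mul] at h4
    have hmid : ((t - b)/(t - a)) * a + ((b - a)/(t - a)) * t = b := by
      field_simp; ring
    rw [hmid] at h4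
    have h5 : (b - a)/(t - a) * f t ≤ f b := by
      have := hf0 a self_mem_Ici
      have hnn : 0 ≤ (t - b)/(t - a) * f a := by positivity
      linarith
    have hba : b - a = 1 := by simp [hb]
    rw [hba, div_mul_eq_mul_div, one_mul, div_le_iff₀ hta] at h5
    have := hf0 b hbS
    nlinarith


lemma sq_eLpNorm_toReal {X : Type*} [MeasurableSpace X] {μ : Measure X} {f : X → ℂ}
    (hf : MemLp f 2 μ) :
    (eLpNorm f 2 μ).toReal ^ 2 = ∫ x, ‖f x‖ ^ 2 ∂μ := by
  have hI : 0 ≤ ∫ x, ‖f x‖ ^ ((2:ℝ≥0∞).toReal) ∂μ :=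
    integral_nonneg fun x => Real.rpow_nonneg (norm_nonneg _) _
  rw [hf.eLpNorm_eq_integral_rpow_norm two_ne_zero ENNReal.ofNat_ne_top,
    ENNReal.toReal_ofReal (Real.rpow_nonneg hI _), ← Real.rpow_natCast _ 2,
    ← Real.rpow_mul hI]
  norm_num


/-- Variable Hilbert Scale Inequality (3.11) realized for the multiplication operator by `g`
on `L²(μ)`: if `g ≥ κ > 0` a.e., `ψ : (0,∞) → (0,∞)` is Borel measurable with
`χ(τ) = ψ(√τ)²` concave on `[κ²,∞)`, and `u ≠ 0`, `u, g·u ∈ L²(μ;ℂ)`, then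
`(ψ∘g)·u ∈ L²` and `‖(ψ∘g)·u‖₂ ≤ ‖u‖₂·ψ(‖g·u‖₂/‖u‖₂)`. -/
theorem variable_hilbert_scale_inequality {X : Type*} [MeasurableSpace X] (μ : Measure X)
    (κ : ℝ) (hκ : 0 < κ) (g : X → ℝ) (hgm : Measurable g) (hgκ : ∀ᵐ x ∂μ, κ ≤ g x)
    (ψ : ℝ → ℝ) (hψm : Measurable ψ) (hψpos : ∀ t : ℝ, 0 < t → 0 < ψ t)
    (hconc : ConcaveOn ℝ (Set.Ici (κ ^ 2)) (fun τ => (ψ (Real.sqrt τ)) ^ 2))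
    (u : X → ℂ) (hu : MemLp u 2 μ) (hune : eLpNorm u 2 μ ≠ 0)
    (hgu : MemLp (fun x => g x • u x) 2 μ) :
    MemLp (fun x => ψ (g x) • u x) 2 μ ∧
      (eLpNorm (fun x => ψ (g x) • u x) 2 μ).toReal ≤
        (eLpNorm u 2 μ).toReal *
          ψ ((eLpNorm (fun x => g x • u x) 2 μ).toReal / (eLpNorm u 2 μ).toReal) := by
  have hκ2 : (0:ℝ) < κ ^ 2 := by positivity
  set χ : ℝ → ℝ := fun τ => ψ (Real.sqrt τ) ^ 2 with hχdef
  have hg2 : ∀ᵐ x ∂μ, κ ^ 2 ≤ g x ^ 2 := hgκ.mono fun x hx => by nlinarith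
  have hIu : Integrable (fun x => ‖u x‖ ^ 2) μ :=
    (memLp_two_iff_integrable_sq_norm hu.1).1 hu
  have hIgu : Integrable (fun x => g x ^ 2 * ‖u x‖ ^ 2) μ := by
    refine ((memLp_two_iff_integrable_sq_norm hgu.1).1 hgu).congr
      (Eventually.of_forall fun x => ?_)
    show ‖g x • u x‖ ^ 2 = g x ^ 2 * ‖u x‖ ^ 2
    rw [norm_smul, mul_pow, Real.norm_eq_abs, sq_abs]
  set A := ∫ x, ‖u x‖ ^ 2 ∂μ with hA
  set B := ∫ x, g x ^ 2 * ‖u x‖ ^ 2 ∂μ with hB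
  have hNu : (eLpNorm u 2 μ).toReal ^ 2 = A := sq_eLpNorm_toReal hu
  have hNgu : (eLpNorm (fun x => g x • u x) 2 μ).toReal ^ 2 = B := by
    rw [sq_eLpNorm_toReal hgu]
    refine integral_congr_ae (Eventually.of_forall fun x => ?_)
    show ‖g x • u x‖ ^ 2 = g x ^ 2 * ‖u x‖ ^ 2
    rw [norm_smul, mul_pow, Real.norm_eq_abs, sq_abs]
  have hNu0 : 0 < (eLpNorm u 2 μ).toReal := by
    have h1 : (eLpNorm u 2 μ).toReal ≠ 0 := ENNReal.toReal_ne_zero.2 ⟨hune, hu.2.ne⟩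
    exact lt_of_le_of_ne ENNReal.toReal_nonneg (Ne.symm h1)
  have hApos : 0 < A := by rw [← hNu]; positivity
  have hBA : κ ^ 2 * A ≤ B := by
    rw [hA, hB, ← integral_const_mul]
    exact integral_mono_ae (hIu.const_mul _) hIgu
      (hg2.mono fun x hx => mul_le_mul_of_nonneg_right hx (sq_nonneg _))
  set m := B / A with hm
  clear_value A B
  clear_value m
  have hmge : κ ^ 2 ≤ m := by rw [hm]; exact (le_div_iff₀ hApos).2 hBA
  have hχ0 : ∀ t ∈ Ici (κ ^ 2), 0 ≤ χ t := fun t _ => sq_nonneg _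
  obtain ⟨M, hM0, hMbd⟩ := lin_bound hκ2 hconc hχ0
  have hχmeas : Measurable χ := (hψm.comp Real.continuous_sqrt.measurable).pow_const 2
  have hIχ : Integrable (fun x => χ (g x ^ 2) * ‖u x‖ ^ 2) μ := by
    have hbd : Integrable (fun x => M * ‖u x‖ ^ 2 + M * (g x ^ 2 * ‖u x‖ ^ 2)) μ :=
      (hIu.const_mul M).add (hIgu.const_mul M)
    refine hbd.mono' ((hχmeas.comp (hgm.pow_const 2)).aestronglyMeasurable.mul
      hIu.aestronglyMeasurable) ?_
    refine hg2.mono fun x hx => ?_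
    have h0 : 0 ≤ χ (g x ^ 2) := sq_nonneg _
    rw [Real.norm_eq_abs, abs_of_nonneg (mul_nonneg h0 (sq_nonneg _))]
    have := hMbd (g x ^ 2) hx
    nlinarith [sq_nonneg (‖u x‖)]
  have hkey : ∫ x, χ (g x ^ 2) * ‖u x‖ ^ 2 ∂μ ≤ χ m * A := by
    rcases eq_or_lt_of_le hmge with he | hlt
    · -- m = κ²
      have hBa : B = κ ^ 2 * A := by
        rw [hm] at he; field_simp at he; linarith [he]
      have hIsub : Integrable (fun x => (g x ^ 2 - κ ^ 2) * ‖u x‖ ^ 2) μ :=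
        (hIgu.sub (hIu.const_mul (κ ^ 2))).congr
          (Eventually.of_forall fun x => by simp only [Pi.sub_apply]; ring)
      have hzero : ∫ x, (g x ^ 2 - κ ^ 2) * ‖u x‖ ^ 2 ∂μ = 0 := by
        have heq : (fun x => (g x ^ 2 - κ ^ 2) * ‖u x‖ ^ 2)
            = fun x => g x ^ 2 * ‖u x‖ ^ 2 - κ ^ 2 * ‖u x‖ ^ 2 := funext fun x => by ring
        rw [heq, integral_sub hIgu (hIu.const_mul _), integral_const_mul, ← hB, ← hA, hBa]
        ring
      have hae0 : ∀ᵐ x ∂μ, (g x ^ 2 - κ ^ 2) * ‖u x‖ ^ 2 = 0 := by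
        have hnn : 0 ≤ᵐ[μ] fun x => (g x ^ 2 - κ ^ 2) * ‖u x‖ ^ 2 :=
          hg2.mono fun x hx => by
            simp only [Pi.zero_apply]; nlinarith [sq_nonneg (‖u x‖)]
        exact (integral_eq_zero_iff_of_nonneg_ae hnn hIsub).1 hzero
      have hcongr : ∫ x, χ (g x ^ 2) * ‖u x‖ ^ 2 ∂μ = ∫ x, χ (κ ^ 2) * ‖u x‖ ^ 2 ∂μ := by
        refine integral_congr_ae (hae0.mono fun x hx => ?_)
        show χ (g x ^ 2) * ‖u x‖ ^ 2 = χ (κ ^ 2) * ‖u x‖ ^ 2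
        rcases mul_eq_zero.1 hx with h | h
        · rw [show g x ^ 2 = κ ^ 2 by linarith]
        · rw [h, mul_zero, mul_zero]
      rw [hcongr, integral_const_mul, ← hA, he]
    · obtain ⟨c, hc⟩ := supp_line hconc hlt
      have hptwise : (fun x => χ (g x ^ 2) * ‖u x‖ ^ 2)
          ≤ᵐ[μ] fun x => (χ m + c * (g x ^ 2 - m)) * ‖u x‖ ^ 2 :=
        hg2.mono fun x hx => mul_le_mul_of_nonneg_right (hc _ hx) (sq_nonneg _)
      have heq2 : (fun x => (χ m + c * (g x ^ 2 - m)) * ‖u x‖ ^ 2)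
          = fun x => (χ m - c * m) * ‖u x‖ ^ 2 + c * (g x ^ 2 * ‖u x‖ ^ 2) :=
        funext fun x => by ring
      have hIrhs : Integrable (fun x => (χ m + c * (g x ^ 2 - m)) * ‖u x‖ ^ 2) μ := by
        rw [heq2]; exact (hIu.const_mul _).add (hIgu.const_mul _)
      have hmA : m * A = B := by rw [hm]; exact div_mul_cancel₀ _ hApos.ne'
      calc ∫ x, χ (g x ^ 2) * ‖u x‖ ^ 2 ∂μ
          ≤ ∫ x, (χ m + c * (g x ^ 2 - m)) * ‖u x‖ ^ 2 ∂μ :=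
            integral_mono_ae hIχ hIrhs hptwise
        _ = (χ m - c * m) * A + c * B := by
            rw [heq2, integral_add (hIu.const_mul _) (hIgu.const_mul _),
              integral_const_mul, integral_const_mul, ← hA, ← hB]
        _ = χ m * A := by linear_combination -c * hmA
  have haepsi : (fun x => ‖ψ (g x) • u x‖ ^ 2) =ᵐ[μ] (fun x => χ (g x ^ 2) * ‖u x‖ ^ 2) :=
    hgκ.mono fun x hx => by
      show ‖ψ (g x) • u x‖ ^ 2 = χ (g x ^ 2) * ‖u x‖ ^ 2
      rw [norm_smul, mul_pow, Real.norm_eq_abs, sq_abs]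
      have hs : Real.sqrt (g x ^ 2) = g x := Real.sqrt_sq (hκ.le.trans hx)
      simp only [hχdef, hs]
  have haesm : AEStronglyMeasurable (fun x => ψ (g x) • u x) μ :=
    ((hψm.comp hgm).aestronglyMeasurable).smul hu.aestronglyMeasurable
  have hmem : MemLp (fun x => ψ (g x) • u x) 2 μ :=
    (memLp_two_iff_integrable_sq_norm haesm).2 (hIχ.congr haepsi.symm)
  refine ⟨hmem, ?_⟩
  have hr : Real.sqrt m = (eLpNorm (fun x => g x • u x) 2 μ).toReal / (eLpNorm u 2 μ).toReal := by
    rw [hm, ← hNu, ← hNgu, Real.sqrt_div (by positivity),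
      Real.sqrt_sq ENNReal.toReal_nonneg, Real.sqrt_sq ENNReal.toReal_nonneg]
  have hrpos : 0 < (eLpNorm (fun x => g x • u x) 2 μ).toReal / (eLpNorm u 2 μ).toReal := by
    rw [← hr]
    have : (0:ℝ) < Real.sqrt (κ ^ 2) := by
      rw [Real.sqrt_sq hκ.le]; exact hκ
    exact lt_of_lt_of_le this (Real.sqrt_le_sqrt hmge)
  have hχm : χ m = ψ ((eLpNorm (fun x => g x • u x) 2 μ).toReal / (eLpNorm u 2 μ).toReal) ^ 2 := by
    simp only [hχdef, hr]
  have hfinal : (eLpNorm (fun x => ψ (g x) • u x) 2 μ).toReal ^ 2 ≤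
      ((eLpNorm u 2 μ).toReal *
        ψ ((eLpNorm (fun x => g x • u x) 2 μ).toReal / (eLpNorm u 2 μ).toReal)) ^ 2 := by
    rw [sq_eLpNorm_toReal hmem, integral_congr_ae haepsi, mul_pow, hNu, ← hχm]
    calc ∫ x, χ (g x ^ 2) * ‖u x‖ ^ 2 ∂μ ≤ χ m * A := hkey
      _ = A * χ m := mul_comm _ _
  exact le_of_pow_le_pow_left₀ two_ne_zero
    (mul_nonneg ENNReal.toReal_nonneg (hψpos _ hrpos).le) hfinal
end

section
/- Let H be a separable complex Hilbert space with a Hilbert (orthonormal) basis (e_j)_{j∈ℕ}, N a normed complex vector space, V a complex vector space, and i_H : H → V, i_N : N → V injective linear maps. Let (ω_j) and (η_j) be bounded sequences of nonzero complex numbers, let R, S : H → H be bounded linear operators with R e_j = ω_j·e_j and S e_j = η_j·e_j for all j, and let R' : H → N be a bounded linear operator with i_N(R'x) = i_H(Rx) for all x ∈ H. For k ∈ ℕ let P_k denote the orthogonal projection of H onto the span of {e_0, …, e_{k−1}}. Then for every nonzero g ∈ H, setting f := R(S g), for each k ∈ ℕ the vector i_H(f − P_k f) lies in the image of i_N, and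 its unique preimage h_k ∈ N satisfies ‖h_k‖_N ≤ ‖R'‖ · ‖S∘(1−P_k)‖ · ‖g − P_k g‖; moreover the sequence (‖g − P_k g‖)_k is nonincreasing and tends to 0 as k → ∞. -/
open MeasureTheory Filter Set

/-- Quantitative estimate (6.12) of Theorem 6.5: let `H` be a separable complex Hilbert
space with Hilbert basis `(e_j)`, `N` a normed complex space, both algebraically embedded
in a complex vector space `V`. Let `R, S` be bounded operators diagonal in the basis with
bounded nonzero eigenvalue sequences `(ω_j)`, `(η_j)`, and `R' : H → N` bounded with
`i_N (R' x) = i_H (R x)`. With `P_k` the orthogonal projection onto the span of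
`e_0, …, e_{k-1}` and `f = R (S g)` for nonzero `g`, the vector `i_H (f - P_k f)` has a
preimage `h_k ∈ N` with `‖h_k‖ ≤ ‖R'‖·‖S∘(1-P_k)‖·‖g - P_k g‖`; moreover
`(‖g - P_k g‖)_k` is nonincreasing and tends to `0`. -/
theorem spectral_expansion_estimate_basis {H : Type*} [NormedAddCommGroup H]
    [InnerProductSpace ℂ H] [CompleteSpace H] [TopologicalSpace.SeparableSpace H]
    {N : Type*} [NormedAddCommGroup N] [NormedSpace ℂ N]
    {V : Type*} [AddCommGroup V] [Module ℂ V]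
    (iH : H →ₗ[ℂ] V) (hiH : Function.Injective iH)
    (iN : N →ₗ[ℂ] V) (hiN : Function.Injective iN)
    (e : HilbertBasis ℕ ℂ H)
    (ω η : ℕ → ℂ) (hωbdd : ∃ M : ℝ, ∀ j, ‖ω j‖ ≤ M) (hηbdd : ∃ M : ℝ, ∀ j, ‖η j‖ ≤ M)
    (hω : ∀ j, ω j ≠ 0) (hη : ∀ j, η j ≠ 0)
    (R S : H →L[ℂ] H) (hRe : ∀ j, R (e j) = ω j • e j) (hSe : ∀ j, S (e j) = η j • e j)
    (R' : H →L[ℂ] N) (hR' : ∀ x : H, iN (R' x) = iH (R x))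
    (P : ℕ → H →L[ℂ] H)
    (hP : ∀ k, P k = ∑ j ∈ Finset.range k, (innerSL ℂ (e j)).smulRight (e j))
    (g : H) (hg : g ≠ 0) :
    (∀ k : ℕ, ∃ h : N, iN h = iH (R (S g) - P k (R (S g))) ∧
      ‖h‖ ≤ ‖R'‖ * ‖S ∘L (ContinuousLinearMap.id ℂ H - P k)‖ * ‖g - P k g‖) ∧
    Antitone (fun k : ℕ => ‖g - P k g‖) ∧
    Tendsto (fun k : ℕ => ‖g - P k g‖) atTop (nhds 0) := by
  have horth : ∀ i j, (inner ℂ (e i) (e j) : ℂ) = if i = j then 1 else 0 :=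
    orthonormal_iff_ite.mp e.orthonormal
  have hPapply : ∀ k (x : H), P k x = ∑ j ∈ Finset.range k, (inner ℂ (e j) x : ℂ) • e j := by
    intro k x
    rw [hP]
    simp [ContinuousLinearMap.sum_apply]
  -- inner products against P k x
  have hPinner : ∀ k i (x : H),
      (inner ℂ (e i) (P k x) : ℂ) = if i ∈ Finset.range k then (inner ℂ (e i) x : ℂ) else 0 := by
    intro k i x
    rw [hPapply, inner_sum]
    simp_rw [inner_smul_right, horth, mul_ite, mul_one, mul_zero]
    rw [Finset.sum_ite_eq (Finset.range k) i (fun j => (inner ℂ (e j) x : ℂ))]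
  -- diagonal operators: inner products
  have key : ∀ (T : H →L[ℂ] H) (τ : ℕ → ℂ), (∀ j, T (e j) = τ j • e j) →
      ∀ i (x : H), (inner ℂ (e i) (T x) : ℂ) = τ i * inner ℂ (e i) x := by
    intro T τ hT i x
    have h1 : HasSum (fun j => e.repr x j • e j) x := e.hasSum_repr x
    have h2 := (h1.mapL T).mapL (innerSL ℂ (e i))
    have hterm : ∀ j, ((innerSL ℂ (e i)) (T (e.repr x j • e j)) : ℂ)
        = if j = i then τ i * e.repr x i else 0 := by
      intro j
      rw [T.map_smul, hT, innerSL_apply_apply, inner_smul_right, inner_smul_right, horth]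
      by_cases hij : i = j
      · subst hij
        simp [smul_eq_mul]
        ring
      · rw [if_neg hij, if_neg (Ne.symm hij)]
        simp
    rw [funext hterm] at h2
    have h4 : HasSum (fun j => (if j = i then τ i * e.repr x i else 0 : ℂ))
        (τ i * e.repr x i) := hasSum_ite_eq i (τ i * e.repr x i)
    rw [show (inner ℂ (e i) (T x) : ℂ) = τ i * e.repr x i from h2.unique h4, e.repr_apply_apply]
  -- P commutes with diagonal operators
  have hcomm : ∀ (T : H →L[ℂ] H) (τ : ℕ → ℂ), (∀ j, T (e j) = τ j • e j) →
      ∀ k (x : H), T (P k x) = P k (T x) := by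
    intro T τ hT k x
    rw [hPapply k x, hPapply k (T x), map_sum]
    refine Finset.sum_congr rfl fun j _ => ?_
    rw [ContinuousLinearMap.map_smul, hT, key T τ hT, smul_smul, mul_comm]
  -- idempotence
  have hidem : ∀ k (x : H), P k (P k x) = P k x := by
    intro k x
    rw [hPapply k (P k x),
      show (∑ j ∈ Finset.range k, (inner ℂ (e j) (P k x) : ℂ) • e j)
          = ∑ j ∈ Finset.range k, (inner ℂ (e j) x : ℂ) • e j from
        Finset.sum_congr rfl fun j hj => by rw [hPinner, if_pos hj]]
    exact (hPapply k x).symm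
  refine ⟨?_, ?_, ?_⟩
  · intro k
    have hfact : R (S g) - P k (R (S g)) = R (S (g - P k g)) := by
      rw [← hcomm R ω hRe, ← hcomm S η hSe]
      simp [map_sub]
    have hS : S (g - P k g) = (S ∘L (ContinuousLinearMap.id ℂ H - P k)) (g - P k g) := by
      have : P k (g - P k g) = 0 := by rw [map_sub, hidem, sub_self]
      simp [ContinuousLinearMap.comp_apply, ContinuousLinearMap.sub_apply, this]
    refine ⟨R' (S (g - P k g)), by rw [hR', hfact], ?_⟩
    calc ‖R' (S (g - P k g))‖ ≤ ‖R'‖ * ‖S (g - P k g)‖ := R'.le_opNorm _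
      _ = ‖R'‖ * ‖(S ∘L (ContinuousLinearMap.id ℂ H - P k)) (g - P k g)‖ := by rw [← hS]
      _ ≤ ‖R'‖ * (‖S ∘L (ContinuousLinearMap.id ℂ H - P k)‖ * ‖g - P k g‖) := by
          exact mul_le_mul_of_nonneg_left ((S ∘L _).le_opNorm _) (norm_nonneg _)
      _ = ‖R'‖ * ‖S ∘L (ContinuousLinearMap.id ℂ H - P k)‖ * ‖g - P k g‖ := by ring
  · refine antitone_nat_of_succ_le fun k => ?_
    have hdecomp : g - P k g = (g - P (k + 1) g) + (inner ℂ (e k) g : ℂ) • e k := by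
      rw [hPapply (k + 1) g, Finset.sum_range_succ, hPapply k g]
      abel
    have h0 : (inner ℂ (e k) (g - P (k + 1) g) : ℂ) = 0 := by
      rw [inner_sub_right, hPinner, if_pos (Finset.self_mem_range_succ k), sub_self]
    have h0' : (inner ℂ (g - P (k + 1) g) (e k) : ℂ) = 0 := by
      rw [← inner_conj_symm, h0, map_zero]
    have hinner0 : (inner ℂ (g - P (k + 1) g) ((inner ℂ (e k) g : ℂ) • e k) : ℂ) = 0 := by
      rw [inner_smul_right, h0', mul_zero]
    have hpyth := norm_add_sq_eq_norm_sq_add_norm_sq_of_inner_eq_zero _ _ hinner0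
    rw [← hdecomp] at hpyth
    nlinarith [norm_nonneg (g - P (k + 1) g), norm_nonneg (g - P k g),
      sq_nonneg ‖(inner ℂ (e k) g : ℂ) • e k‖]
  · have h1 : HasSum (fun j => e.repr g j • e j) g := e.hasSum_repr g
    have h2 : Tendsto (fun k => ∑ j ∈ Finset.range k, e.repr g j • e j) atTop (nhds g) :=
      h1.tendsto_sum_nat
    have h3 : ∀ k, P k g = ∑ j ∈ Finset.range k, e.repr g j • e j := by
      intro k
      rw [hPapply]
      simp [e.repr_apply_apply]
    have h4 : Tendsto (fun k => g - P k g) atTop (nhds 0) := by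
      simpa only [h3, sub_self] using (tendsto_const_nhds (x := g) (f := atTop)).sub h2
    simpa using h4.norm
end

section
/- Let H be a separable complex Hilbert space with a Hilbert (orthonormal) basis (e_j)_{j∈ℕ}, N a normed complex vector space, V a complex vector space, and i_H : H → V, i_N : N → V injective linear maps. Let (ω_j) and (η_j) be bounded sequences of nonzero complex numbers, let R, S : H → H be bounded linear operators with R e_j = ω_j·e_j and S e_j = η_j·e_j for all j, and let R' : H → N be a bounded linear operator with i_N(R'x) = i_H(Rx) for all x ∈ H. Then for every f in the range of R∘S the orthogonal expansion of f converges to f in N unconditionally: for every permutation σ of ℕ and every k ∈ ℕ the vector i_H(f − Σ_{j<k} ⟨f, e_{σ(j)}⟩ e_{σ(j)}) lies in the image of i_N, and the N-norms of its unique preimages tend to 0 as k → ∞. -/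
set_option maxHeartbeats 1000000


open MeasureTheory Filter Set

/-- Convergence conclusion of Theorem 6.5: with `H`, `N` embedded in `V`, a Hilbert basis
`(e_j)` of `H`, diagonal bounded operators `R, S` with bounded nonzero eigenvalue sequences,
and `R' : H → N` bounded with `i_N (R' x) = i_H (R x)`, for every `f` in the range of `R∘S`
the orthogonal expansion of `f` converges to `f` in `N` unconditionally: for every
permutation `σ` of `ℕ`, the remainders `i_H (f - ∑_{j<k} ⟨e_{σ(j)}, f⟩ e_{σ(j)})` have
preimages in `N` whose norms tend to `0`. -/
theorem spectral_expansion_unconditional_convergence {H : Type*} [NormedAddCommGroup H]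
    [InnerProductSpace ℂ H] [CompleteSpace H] [TopologicalSpace.SeparableSpace H]
    {N : Type*} [NormedAddCommGroup N] [NormedSpace ℂ N]
    {V : Type*} [AddCommGroup V] [Module ℂ V]
    (iH : H →ₗ[ℂ] V) (hiH : Function.Injective iH)
    (iN : N →ₗ[ℂ] V) (hiN : Function.Injective iN)
    (e : HilbertBasis ℕ ℂ H)
    (ω η : ℕ → ℂ) (hωbdd : ∃ M : ℝ, ∀ j, ‖ω j‖ ≤ M) (hηbdd : ∃ M : ℝ, ∀ j, ‖η j‖ ≤ M)
    (hω : ∀ j, ω j ≠ 0) (hη : ∀ j, η j ≠ 0)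
    (R S : H →L[ℂ] H) (hRe : ∀ j, R (e j) = ω j • e j) (hSe : ∀ j, S (e j) = η j • e j)
    (R' : H →L[ℂ] N) (hR' : ∀ x : H, iN (R' x) = iH (R x))
    (f : H) (hf : ∃ g : H, f = R (S g)) :
    ∀ σ : Equiv.Perm ℕ, ∃ h : ℕ → N,
      (∀ k : ℕ, iN (h k) =
        iH (f - ∑ j ∈ Finset.range k, (inner ℂ (e (σ j)) f : ℂ) • e (σ j))) ∧
      Tendsto (fun k : ℕ => ‖h k‖) atTop (nhds 0) := by
  classical
  obtain ⟨g, hfg⟩ := hf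
  intro σ
  set x := S g with hx
  -- key: inner product coefficients of R y
  have hinner : ∀ (i : ℕ) (y : H), (inner ℂ (e i) (R y) : ℂ) = ω i * inner ℂ (e i) y := by
    intro i y
    have h1 : HasSum (fun j => ((inner ℂ (e j) y : ℂ) * ω j) • e j) (R y) := by
      have := (e.hasSum_repr y).mapL R
      refine this.congr_fun fun j => ?_
      simp [e.repr_apply_apply, hRe, smul_smul]
    have h2 : HasSum (fun j => (inner ℂ (e i) (((inner ℂ (e j) y : ℂ) * ω j) • e j) : ℂ))
        (inner ℂ (e i) (R y)) := h1.mapL (innerSL ℂ (e i))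
    have h3 : HasSum (fun j => if j = i then ω i * (inner ℂ (e i) y : ℂ) else 0)
        (inner ℂ (e i) (R y)) := by
      refine h2.congr_fun fun j => ?_
      rw [inner_smul_right]
      rcases eq_or_ne j i with rfl | hne
      · simp [inner_self_eq_norm_sq_to_K, e.orthonormal.1 j]
        ring
      · have : (inner ℂ (e i) (e j) : ℂ) = 0 := e.orthonormal.2 (Ne.symm hne)
        simp [this, hne]
    have h4 : HasSum (fun j => if j = i then ω i * (inner ℂ (e i) y : ℂ) else 0)
        (ω i * inner ℂ (e i) y) := hasSum_ite_eq i _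
    exact h3.unique h4
  refine ⟨fun k => R' (x - ∑ j ∈ Finset.range k, (inner ℂ (e (σ j)) x : ℂ) • e (σ j)), ?_, ?_⟩
  · intro k
    rw [hR']
    congr 1
    rw [map_sub, hfg, map_sum]
    congr 1
    refine Finset.sum_congr rfl fun j _ => ?_
    rw [R.map_smul, hRe, smul_smul, hinner, mul_comm]
  · have hsum : HasSum (fun j => (inner ℂ (e j) x : ℂ) • e j) x := by
      have := e.hasSum_repr x
      refine this.congr_fun fun j => ?_
      simp [e.repr_apply_apply]
    have hsum' : HasSum (fun j => (inner ℂ (e (σ j)) x : ℂ) • e (σ j)) x :=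
      (σ : ℕ ≃ ℕ).hasSum_iff.mpr hsum
    have h0 : Tendsto (fun k => x - ∑ j ∈ Finset.range k,
        (inner ℂ (e (σ j)) x : ℂ) • e (σ j)) atTop (nhds 0) := by
      have hc : Tendsto (fun _ : ℕ => x) atTop (nhds x) := tendsto_const_nhds
      simpa using hc.sub hsum'.tendsto_sum_nat
    have h1 := (R'.continuous.tendsto 0).comp h0
    have h2 : Tendsto (fun k => R' (x - ∑ j ∈ Finset.range k,
        (inner ℂ (e (σ j)) x : ℂ) • e (σ j))) atTop (nhds 0) := by simpa only [Function.comp_def, map_zero] using h1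
    simpa using h2.norm
end
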